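/- arXiv:math-ph/0103009 — 4 statements merged into one kernel-verified Lean document; each statement's English description precedes it below -/
import Mathlib

section
/- Let ρ = (ρ_m)_m be a sequence of nonnegative integrable functions on ℝ satisfying the DSTF Thomas–Fermi equations with zero chemical potential: for every m ∈ ℕ and almost every z, 3κ ρ_m(z)² = [ Z V_m(z) − Σ_n ∫ V_{m,n}(z − z') ρ_n(z') dz' ]_+ (the equation satisfied by the unconstrained DSTF minimizer, with total mass N_c = Σ_m ∫ ρ_m). Then N_c = Σ_m ∫ ρ_m ≤ 4Z. -/
open MeasureTheory Real ENNReal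

set_option maxHeartbeats 1000000

noncomputable section

/-- Squared modulus `|φ_m(x⊥)|²` of the lowest Landau band function with angular
momentum `-m` and magnetic field strength `B`. -/
def phiSq (B : ℝ) (m : ℕ) (xp : ℝ × ℝ) : ℝ :=
  B / (2 * π) * (1 / (Nat.factorial m : ℝ)) * (B * (xp.1 ^ 2 + xp.2 ^ 2) / 2) ^ m *
    Real.exp (-(B * (xp.1 ^ 2 + xp.2 ^ 2)) / 2)

/-- `|x|` for `x = (x⊥, z) ∈ ℝ² × ℝ`. -/
def normx (xp : ℝ × ℝ) (z : ℝ) : ℝ := Real.sqrt (xp.1 ^ 2 + xp.2 ^ 2 + z ^ 2)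

/-- `V_m(z) = ∫ |φ_m(x⊥)|² / |(x⊥,z)| dx⊥`. -/
def Vm (B : ℝ) (m : ℕ) (z : ℝ) : ℝ := ∫ xp : ℝ × ℝ, phiSq B m xp / normx xp z

/-- `V_{m,n}(w) = ∬ |φ_m(x⊥)|²|φ_n(x⊥')|²/|(x⊥ - x⊥', w)| dx⊥ dx⊥'`. -/
def Vmn (B : ℝ) (m n : ℕ) (w : ℝ) : ℝ :=
  ∫ xp : ℝ × ℝ, ∫ yp : ℝ × ℝ,
    phiSq B m xp * phiSq B n yp / normx (xp.1 - yp.1, xp.2 - yp.2) w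

/-- `κ = π²/3`. -/
def kappa : ℝ := π ^ 2 / 3

/-- Repulsion energy `D̄(ρ,ρ)` of a sequence of one-dimensional densities. -/
def Dbar (B : ℝ) (ρ : ℕ → ℝ → ℝ) : ℝ :=
  (1 / 2) * ∑' m : ℕ, ∑' n : ℕ, ∫ z : ℝ, ∫ z' : ℝ, Vmn B m n (z - z') * ρ m z * ρ n z'

/-- The DSTF functional. -/
def EDSTF (B Z : ℝ) (ρ : ℕ → ℝ → ℝ) : ℝ :=
  (∑' m : ℕ, (kappa * ∫ z : ℝ, ρ m z ^ 3 - Z * ∫ z : ℝ, Vm B m z * ρ m z)) + Dbar B ρ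

/-- The domain `D` of the DSTF functional: sequences of nonnegative measurable
functions with `Σ_m ∫ρ_m³ < ∞`, `Σ_m ∫ V_m ρ_m < ∞` and `D̄(ρ,ρ) < ∞`. -/
structure MemD (B : ℝ) (ρ : ℕ → ℝ → ℝ) : Prop where
  meas : ∀ m, Measurable (ρ m)
  nonneg : ∀ m z, 0 ≤ ρ m z
  cube_int : ∀ m, Integrable (fun z => ρ m z ^ 3)
  cube_sum : Summable (fun m => ∫ z : ℝ, ρ m z ^ 3)
  pot_int : ∀ m, Integrable (fun z => Vm B m z * ρ m z)
  pot_sum : Summable (fun m => ∫ z : ℝ, Vm B m z * ρ m z)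
  rep_int : ∀ m n, Integrable (fun p : ℝ × ℝ => Vmn B m n (p.1 - p.2) * ρ m p.1 * ρ n p.2)
  rep_sum : Summable (fun p : ℕ × ℕ =>
    ∫ z : ℝ, ∫ z' : ℝ, Vmn B p.1 p.2 (z - z') * ρ p.1 z * ρ p.2 z')

/-- Total particle number `Σ_m ∫ ρ_m` of a sequence of 1D densities. -/
def massD (ρ : ℕ → ℝ → ℝ) : ℝ := ∑' m : ℕ, ∫ z : ℝ, ρ m z

/-- The particle number of `ρ` is a well-defined (finite) quantity. -/
def HasMass (ρ : ℕ → ℝ → ℝ) : Prop :=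
  (∀ m, Integrable (ρ m)) ∧ Summable (fun m => ∫ z : ℝ, ρ m z)

/-- The DSTF ground state energy `E^DSTF(N,Z,B)` with particle number at most `N`. -/
def EDSTFinf (N Z B : ℝ) : ℝ :=
  sInf { e | ∃ ρ, MemD B ρ ∧ HasMass ρ ∧ massD ρ ≤ N ∧ e = EDSTF B Z ρ }

/-- Indicator `χ_m` of the annulus `√(2m/B) ≤ |x⊥| ≤ √(2(m+1)/B)`. -/
def chiA (B : ℝ) (m : ℕ) (xp : ℝ × ℝ) : ℝ :=
  if Real.sqrt (2 * m / B) ≤ Real.sqrt (xp.1 ^ 2 + xp.2 ^ 2) ∧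
      Real.sqrt (xp.1 ^ 2 + xp.2 ^ 2) ≤ Real.sqrt (2 * (m + 1) / B) then 1 else 0

/-- `Ṽ(x) = Σ_m χ_m(x⊥) V_m(z)`. -/
def Vtilde (B : ℝ) (x : (ℝ × ℝ) × ℝ) : ℝ := ∑' m : ℕ, chiA B m x.1 * Vm B m x.2

/-- The modified repulsion energy `D̃(ρ,ρ)` for a three-dimensional density. -/
def Dtilde (B : ℝ) (ρ : (ℝ × ℝ) × ℝ → ℝ) : ℝ :=
  (1 / 2) * ∑' m : ℕ, ∑' n : ℕ, ∫ x : (ℝ × ℝ) × ℝ, ∫ y : (ℝ × ℝ) × ℝ,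
    Vmn B m n (x.2 - y.2) * chiA B m x.1 * chiA B n y.1 * ρ x * ρ y

/-- The MSTF functional. -/
def EMSTF (B Z : ℝ) (ρ : (ℝ × ℝ) × ℝ → ℝ) : ℝ :=
  4 * π ^ 4 / (3 * B ^ 2) * (∫ x : (ℝ × ℝ) × ℝ, ρ x ^ 3)
    - Z * (∫ x : (ℝ × ℝ) × ℝ, Vtilde B x * ρ x) + Dtilde B ρ

/-- The domain `D̃` of the MSTF functional. -/
structure MemDt (B : ℝ) (ρ : (ℝ × ℝ) × ℝ → ℝ) : Prop where
  meas : Measurable ρ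
  nonneg : ∀ x, 0 ≤ ρ x
  lp3 : MemLp ρ 3 (volume : Measure ((ℝ × ℝ) × ℝ))
  pot_int : Integrable (fun x : (ℝ × ℝ) × ℝ => Vtilde B x * ρ x)
  rep_int : ∀ m n, Integrable (fun p : ((ℝ × ℝ) × ℝ) × ((ℝ × ℝ) × ℝ) =>
    Vmn B m n (p.1.2 - p.2.2) * chiA B m p.1.1 * chiA B n p.2.1 * ρ p.1 * ρ p.2)
  rep_sum : Summable (fun p : ℕ × ℕ => ∫ x : (ℝ × ℝ) × ℝ, ∫ y : (ℝ × ℝ) × ℝ,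
    Vmn B p.1 p.2 (x.2 - y.2) * chiA B p.1 x.1 * chiA B p.2 y.1 * ρ x * ρ y)

/-- The MSTF ground state energy `E^MSTF(N,Z,B)` with particle number at most `N`. -/
def EMSTFinf (N Z B : ℝ) : ℝ :=
  sInf { e | ∃ ρ, MemDt B ρ ∧ Integrable ρ ∧ (∫ x : (ℝ × ℝ) × ℝ, ρ x) ≤ N ∧ e = EMSTF B Z ρ }

/-- The one-dimensional DSTF functional (angular momentum channel `m = 0`). -/
def E1DSTF (B Z : ℝ) (ρ : ℝ → ℝ) : ℝ :=
  kappa * (∫ z : ℝ, ρ z ^ 3) - Z * (∫ z : ℝ, Vm B 0 z * ρ z)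
    + (1 / 2) * ∫ z : ℝ, ∫ z' : ℝ, Vmn B 0 0 (z - z') * ρ z * ρ z'

/-- The one-dimensional functional without the repulsion term. -/
def E1Dw (B Z : ℝ) (ρ : ℝ → ℝ) : ℝ :=
  kappa * (∫ z : ℝ, ρ z ^ 3) - Z * (∫ z : ℝ, Vm B 0 z * ρ z)

/-- Admissible densities for the 1D theory: all three terms of the functional finite. -/
structure Adm1 (B : ℝ) (ρ : ℝ → ℝ) : Prop where
  meas : Measurable ρ
  nonneg : ∀ z, 0 ≤ ρ z
  cube_int : Integrable (fun z => ρ z ^ 3)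
  pot_int : Integrable (fun z => Vm B 0 z * ρ z)
  rep_int : Integrable (fun p : ℝ × ℝ => Vmn B 0 0 (p.1 - p.2) * ρ p.1 * ρ p.2)

/-- Absolute minimum `Ē^{1DSTF}(Z,B)` of the 1D DSTF functional. -/
def Ebar1DSTF (Z B : ℝ) : ℝ := sInf { e | ∃ ρ, Adm1 B ρ ∧ e = E1DSTF B Z ρ }

/-- `E^{1D}_w(Z,B)`: infimum of the 1D functional without repulsion over `Adm1`. -/
def E1Dwinf (Z B : ℝ) : ℝ := sInf { e | ∃ ρ, Adm1 B ρ ∧ e = E1Dw B Z ρ }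

/-- Admissible densities for the functional without repulsion:
nonnegative with `∫ρ³ < ∞` and `∫ V₀ ρ < ∞`. -/
structure Adm1w (B : ℝ) (ρ : ℝ → ℝ) : Prop where
  meas : Measurable ρ
  nonneg : ∀ z, 0 ≤ ρ z
  cube_int : Integrable (fun z => ρ z ^ 3)
  pot_int : Integrable (fun z => Vm B 0 z * ρ z)

/-- `E^{1D}_w(Z,B)` as infimum over `Adm1w`. -/
def E1DwinfW (Z B : ℝ) : ℝ := sInf { e | ∃ ρ, Adm1w B ρ ∧ e = E1Dw B Z ρ }


namespace Stmt9

open Set MeasureTheory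

/-- The weight `A_m(z) = ∫ p_m(x⊥) |(x⊥,z)| dx⊥`. -/
def Am (B : ℝ) (m : ℕ) (z : ℝ) : ℝ := ∫ xp : ℝ × ℝ, phiSq B m xp * normx xp z

lemma normx_nonneg (xp : ℝ × ℝ) (z : ℝ) : 0 ≤ normx xp z := Real.sqrt_nonneg _

lemma phiSq_nonneg {B : ℝ} (hB : 0 < B) (m : ℕ) (xp : ℝ × ℝ) : 0 ≤ phiSq B m xp := by
  unfold phiSq
  have h2 : (0:ℝ) ≤ B * (xp.1 ^ 2 + xp.2 ^ 2) / 2 := by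
    have : (0:ℝ) ≤ xp.1 ^ 2 + xp.2 ^ 2 := by positivity
    positivity
  apply mul_nonneg (mul_nonneg (mul_nonneg ?_ ?_) ?_) (Real.exp_pos _).le
  · exact div_nonneg hB.le (by positivity)
  · positivity
  · exact pow_nonneg h2 m

lemma phiSq_continuous (B : ℝ) (m : ℕ) : Continuous (phiSq B m) := by
  unfold phiSq; fun_prop

lemma normx_continuous : Continuous (fun p : (ℝ × ℝ) × ℝ => normx p.1 p.2) := by
  unfold normx; fun_prop

lemma abs_le_normx (x : ℝ × ℝ) (z : ℝ) : |z| ≤ normx x z := by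
  unfold normx
  rw [← Real.sqrt_sq_eq_abs]
  exact Real.sqrt_le_sqrt (by nlinarith [sq_nonneg x.1, sq_nonneg x.2])

lemma normx_le_add (x y : ℝ × ℝ) (z z' : ℝ) :
    normx (x.1 - y.1, x.2 - y.2) (z - z') ≤ normx x z + normx y z' := by
  unfold normx
  set a := Real.sqrt (x.1 ^ 2 + x.2 ^ 2 + z ^ 2) with ha_def
  set b := Real.sqrt (y.1 ^ 2 + y.2 ^ 2 + z' ^ 2) with hb_def
  have ha : 0 ≤ a := Real.sqrt_nonneg _
  have hb : 0 ≤ b := Real.sqrt_nonneg _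
  have ha2 : a ^ 2 = x.1 ^ 2 + x.2 ^ 2 + z ^ 2 := Real.sq_sqrt (by positivity)
  have hb2 : b ^ 2 = y.1 ^ 2 + y.2 ^ 2 + z' ^ 2 := Real.sq_sqrt (by positivity)
  have hcs : (x.1 * y.1 + x.2 * y.2 + z * z') ^ 2 ≤ (a ^ 2) * (b ^ 2) := by
    rw [ha2, hb2]
    nlinarith [sq_nonneg (x.1 * y.2 - x.2 * y.1), sq_nonneg (x.1 * z' - z * y.1),
      sq_nonneg (x.2 * z' - z * y.2)]
  have hip : -(x.1 * y.1 + x.2 * y.2 + z * z') ≤ a * b := by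
    nlinarith [mul_nonneg ha hb]
  have key : (x.1 - y.1) ^ 2 + (x.2 - y.2) ^ 2 + (z - z') ^ 2 ≤ (a + b) ^ 2 := by
    nlinarith
  calc Real.sqrt ((x.1 - y.1, x.2 - y.2).1 ^ 2 + (x.1 - y.1, x.2 - y.2).2 ^ 2 + (z - z') ^ 2)
      ≤ Real.sqrt ((a + b) ^ 2) := Real.sqrt_le_sqrt (by simpa using key)
    _ = a + b := Real.sqrt_sq (by linarith)

/-- Integral of a radial function on `ℝ²` via polar coordinates. -/
lemma integral_radial (g : ℝ → ℝ) :
    (∫ x : ℝ × ℝ, g (x.1 ^ 2 + x.2 ^ 2)) = π * ∫ s in Ioi (0:ℝ), g s := by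
  rw [← integral_comp_polarCoord_symm (fun x : ℝ × ℝ => g (x.1 ^ 2 + x.2 ^ 2))]
  have h1 : ∀ p : ℝ × ℝ, p ∈ polarCoord.target →
      p.1 • g ((polarCoord.symm p).1 ^ 2 + (polarCoord.symm p).2 ^ 2)
        = (p.1 * g (p.1 ^ 2)) * 1 := by
    intro p _
    have hs : (polarCoord.symm p).1 ^ 2 + (polarCoord.symm p).2 ^ 2 = p.1 ^ 2 := by
      simp only [polarCoord_symm_apply]
      have := Real.cos_sq_add_sin_sq p.2
      ring_nf
      nlinarith [Real.cos_sq_add_sin_sq p.2]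
    rw [hs, smul_eq_mul, mul_one]
  rw [setIntegral_congr_fun (polarCoord.open_target.measurableSet) h1]
  have htarget : polarCoord.target = Ioi (0:ℝ) ×ˢ Ioo (-π) π := rfl
  rw [htarget, Measure.volume_eq_prod,
    setIntegral_prod_mul (fun r : ℝ => r * g (r ^ 2)) (fun _ : ℝ => (1:ℝ))]
  have hone : (∫ _ in Ioo (-π) π, (1:ℝ)) = 2 * π := by
    simp [Real.volume_Ioo]
    rw [max_eq_left (by positivity)]
    ring
  have h2 : (∫ r in Ioi (0:ℝ), r * g (r ^ 2)) = (1/2) * ∫ s in Ioi (0:ℝ), g s := by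
    have hrpow := integral_comp_rpow_Ioi_of_pos (g := g) (p := 2) two_pos
    have hcongr : ∀ x ∈ Ioi (0:ℝ),
        ((2:ℝ) * x ^ ((2:ℝ) - 1)) • g (x ^ (2:ℝ)) = 2 * (x * g (x ^ 2)) := by
      intro x hx
      have hx0 : (0:ℝ) ≤ x := (le_of_lt hx)
      have h21 : ((2:ℝ) - 1) = (1:ℝ) := by norm_num
      rw [h21, Real.rpow_one, smul_eq_mul]
      have : x ^ (2:ℝ) = x ^ (2:ℕ) := by
        rw [← Real.rpow_natCast x 2]; norm_num
      rw [this]; ring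
    rw [setIntegral_congr_fun measurableSet_Ioi hcongr] at hrpow
    rw [integral_const_mul] at hrpow
    linarith
  rw [hone, h2]; ring

/-- Scaling substitution on `Ioi 0`. -/
lemma integral_Ioi_scale {a : ℝ} (ha : 0 < a) (g : ℝ → ℝ) :
    (∫ s in Ioi (0:ℝ), g (a * s)) = a⁻¹ * ∫ u in Ioi (0:ℝ), g u := by
  have := integral_comp_mul_left_Ioi g 0 ha
  rw [mul_zero] at this
  rw [this, smul_eq_mul]

/-- The master reduction of radial `ℝ²` integrals against `phiSq` to Gamma-type integrals. -/
lemma phi_reduce {B : ℝ} (hB : 0 < B) (m : ℕ) (h : ℝ → ℝ) :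
    (∫ x : ℝ × ℝ, phiSq B m x * h (x.1 ^ 2 + x.2 ^ 2))
      = (m.factorial : ℝ)⁻¹ * ∫ u in Ioi (0:ℝ), u ^ m * Real.exp (-u) * h (2 * u / B) := by
  have hfact : (0:ℝ) < (m.factorial : ℝ) := by exact_mod_cast m.factorial_pos
  set G : ℝ → ℝ := fun u => B / (2 * π) * (1 / (m.factorial : ℝ)) * u ^ m * Real.exp (-u)
      * h (2 * u / B) with hG
  have hpt : ∀ x : ℝ × ℝ, phiSq B m x * h (x.1 ^ 2 + x.2 ^ 2)
      = G ((B/2) * (x.1 ^ 2 + x.2 ^ 2)) := by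
    intro x
    have hB0 : B ≠ 0 := ne_of_gt hB
    simp only [hG, phiSq]
    rw [show 2 * (B / 2 * (x.1 ^ 2 + x.2 ^ 2)) / B = x.1 ^ 2 + x.2 ^ 2 by field_simp]
    rw [show -(B / 2 * (x.1 ^ 2 + x.2 ^ 2)) = -(B * (x.1 ^ 2 + x.2 ^ 2)) / 2 by ring]
    rw [show B / 2 * (x.1 ^ 2 + x.2 ^ 2) = B * (x.1 ^ 2 + x.2 ^ 2) / 2 by ring]
  calc (∫ x : ℝ × ℝ, phiSq B m x * h (x.1 ^ 2 + x.2 ^ 2))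
      = ∫ x : ℝ × ℝ, G ((B/2) * (x.1 ^ 2 + x.2 ^ 2)) := by
        exact integral_congr_ae (Filter.Eventually.of_forall hpt)
    _ = π * ∫ s in Ioi (0:ℝ), G ((B/2) * s) := integral_radial (fun s => G ((B/2) * s))
    _ = π * ((B/2)⁻¹ * ∫ u in Ioi (0:ℝ), G u) := by
        rw [integral_Ioi_scale (by positivity) G]
    _ = (m.factorial : ℝ)⁻¹ * ∫ u in Ioi (0:ℝ), u ^ m * Real.exp (-u) * h (2 * u / B) := by
        have : ∫ u in Ioi (0:ℝ), G u
            = (B / (2 * π) * (1 / (m.factorial : ℝ)))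
              * ∫ u in Ioi (0:ℝ), u ^ m * Real.exp (-u) * h (2 * u / B) := by
          rw [← integral_const_mul]
          apply integral_congr_ae (Filter.Eventually.of_forall ?_)
          intro u; simp only [hG]; ring
        rw [this]
        have hπ0 : π ≠ 0 := ne_of_gt Real.pi_pos
        have hB0 : B ≠ 0 := ne_of_gt hB
        have hf0 : (m.factorial : ℝ) ≠ 0 := ne_of_gt hfact
        field_simp
  
lemma int_qm (m : ℕ) : (∫ u in Ioi (0:ℝ), u ^ m * Real.exp (-u)) = (m.factorial : ℝ) := by
  have h := Real.Gamma_eq_integral (s := (m:ℝ) + 1) (by positivity)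
  rw [Real.Gamma_nat_eq_factorial] at h
  rw [h]
  apply setIntegral_congr_fun measurableSet_Ioi
  intro u hu
  have hu0 : (0:ℝ) < u := hu
  dsimp only
  rw [show (m:ℝ) + 1 - 1 = (m:ℝ) by ring, Real.rpow_natCast]
  ring

lemma int_qm_sqrt (m : ℕ) :
    (∫ u in Ioi (0:ℝ), u ^ m * Real.exp (-u) * Real.sqrt u) = Real.Gamma ((m:ℝ) + 3/2) := by
  rw [Real.Gamma_eq_integral (by positivity)]
  apply setIntegral_congr_fun measurableSet_Ioi
  intro u hu
  have hu0 : (0:ℝ) < u := hu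
  dsimp only
  rw [show (m:ℝ) + 3/2 - 1 = (m:ℝ) + 1/2 by ring, Real.rpow_add hu0, Real.rpow_natCast,
    show Real.sqrt u = u ^ (1/2 : ℝ) from Real.sqrt_eq_rpow u]
  ring

lemma int_qm_invsqrt (m : ℕ) :
    (∫ u in Ioi (0:ℝ), u ^ m * Real.exp (-u) / Real.sqrt u) = Real.Gamma ((m:ℝ) + 1/2) := by
  rw [Real.Gamma_eq_integral (by positivity)]
  apply setIntegral_congr_fun measurableSet_Ioi
  intro u hu
  have hu0 : (0:ℝ) < u := hu
  have hsq : Real.sqrt u = u ^ (1/2 : ℝ) := Real.sqrt_eq_rpow u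
  have hne : u ^ (1/2 : ℝ) ≠ 0 := by
    have := Real.rpow_pos_of_pos hu0 (1/2); exact ne_of_gt this
  dsimp only
  rw [show (m:ℝ) + 1/2 - 1 = (m:ℝ) + -(1/2) by ring, Real.rpow_add hu0, Real.rpow_natCast,
    Real.rpow_neg hu0.le, hsq]
  field_simp

lemma integrableOn_qm_rpow (m : ℕ) (r : ℝ) (hr : -1 < r) :
    IntegrableOn (fun u : ℝ => u ^ m * Real.exp (-u) * u ^ r) (Ioi (0:ℝ)) := by
  have h := Real.GammaIntegral_convergent (s := (m:ℝ) + r + 1) (by nlinarith [Nat.cast_nonneg (α := ℝ) m])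
  apply h.congr_fun ?_ measurableSet_Ioi
  intro u hu
  have hu0 : (0:ℝ) < u := hu
  dsimp only
  rw [show (m:ℝ) + r + 1 - 1 = (m:ℝ) + r by ring, Real.rpow_add hu0, Real.rpow_natCast]
  ring

lemma integrableOn_qm (m : ℕ) :
    IntegrableOn (fun u : ℝ => u ^ m * Real.exp (-u)) (Ioi (0:ℝ)) := by
  have h := integrableOn_qm_rpow m 0 (by norm_num)
  apply h.congr_fun ?_ measurableSet_Ioi
  intro u hu
  have hu0 : (0:ℝ) < u := hu
  dsimp only
  rw [Real.rpow_zero, mul_one]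

lemma integrableOn_qm_sqrt (m : ℕ) :
    IntegrableOn (fun u : ℝ => u ^ m * Real.exp (-u) * Real.sqrt u) (Ioi (0:ℝ)) := by
  have h := integrableOn_qm_rpow m (1/2) (by norm_num)
  apply h.congr_fun ?_ measurableSet_Ioi
  intro u hu
  have hu0 : (0:ℝ) < u := hu
  dsimp only
  rw [Real.sqrt_eq_rpow]

lemma integrableOn_qm_invsqrt (m : ℕ) :
    IntegrableOn (fun u : ℝ => u ^ m * Real.exp (-u) / Real.sqrt u) (Ioi (0:ℝ)) := by
  have h := integrableOn_qm_rpow m (-(1/2)) (by norm_num)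
  apply h.congr_fun ?_ measurableSet_Ioi
  intro u hu
  have hu0 : (0:ℝ) < u := hu
  dsimp only
  rw [Real.rpow_neg hu0.le, Real.sqrt_eq_rpow]
  ring

lemma integrableOn_qm_sqrt_add (m : ℕ) {c : ℝ} (hc : 0 ≤ c) :
    IntegrableOn (fun u : ℝ => u ^ m * Real.exp (-u) * Real.sqrt (u + c)) (Ioi (0:ℝ)) := by
  have hg : IntegrableOn
      (fun u : ℝ => u ^ m * Real.exp (-u) * Real.sqrt u + Real.sqrt c * (u ^ m * Real.exp (-u)))
      (Ioi (0:ℝ)) := (integrableOn_qm_sqrt m).add ((integrableOn_qm m).const_mul _)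
  apply hg.mono' ?_ ?_
  · apply Measurable.aestronglyMeasurable; fun_prop
  · filter_upwards [ae_restrict_mem measurableSet_Ioi] with u hu
    have hu0 : (0:ℝ) < u := hu
    have hq : (0:ℝ) ≤ u ^ m * Real.exp (-u) := by positivity
    rw [Real.norm_of_nonneg (by positivity)]
    have : Real.sqrt (u + c) ≤ Real.sqrt u + Real.sqrt c := by
      have h' := Real.sqrt_le_sqrt (show u + c ≤ (Real.sqrt u + Real.sqrt c) ^ 2 by
        nlinarith [Real.sq_sqrt hu0.le, Real.sq_sqrt hc,
          mul_nonneg (Real.sqrt_nonneg u) (Real.sqrt_nonneg c)])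
      rwa [Real.sqrt_sq (by positivity)] at h'
    nlinarith [Real.sqrt_nonneg c, Real.sqrt_nonneg u]

lemma integrableOn_qm_invsqrt_add (m : ℕ) {c : ℝ} (hc : 0 ≤ c) :
    IntegrableOn (fun u : ℝ => u ^ m * Real.exp (-u) / Real.sqrt (u + c)) (Ioi (0:ℝ)) := by
  apply (integrableOn_qm_invsqrt m).mono' ?_ ?_
  · apply Measurable.aestronglyMeasurable; fun_prop
  · filter_upwards [ae_restrict_mem measurableSet_Ioi] with u hu
    have hu0 : (0:ℝ) < u := hu
    have hq : (0:ℝ) ≤ u ^ m * Real.exp (-u) := by positivity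
    rw [Real.norm_of_nonneg (by positivity)]
    apply div_le_div_of_nonneg_left hq (Real.sqrt_pos.mpr hu0)
    exact Real.sqrt_le_sqrt (by linarith)

lemma gamma_prod_le (m : ℕ) :
    Real.Gamma ((m:ℝ) + 3/2) * Real.Gamma ((m:ℝ) + 1/2) ≤ 2 * ((m.factorial : ℝ)) ^ 2 := by
  induction m with
  | zero =>
    simp only [Nat.cast_zero, zero_add, Nat.factorial_zero, Nat.cast_one]
    rw [show (3/2:ℝ) = 1/2 + 1 by norm_num, Real.Gamma_add_one (by norm_num),
      Real.Gamma_one_half_eq]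
    have h1 : Real.sqrt π * Real.sqrt π = π := Real.mul_self_sqrt Real.pi_pos.le
    nlinarith [Real.pi_le_four]
  | succ k ih =>
    have hp1 : 0 < Real.Gamma ((k:ℝ) + 3/2) := Real.Gamma_pos_of_pos (by positivity)
    have hp2 : 0 < Real.Gamma ((k:ℝ) + 1/2) := Real.Gamma_pos_of_pos (by positivity)
    have e1 : ((k+1 : ℕ):ℝ) + 3/2 = ((k:ℝ) + 3/2) + 1 := by push_cast; ring
    have e2 : ((k+1 : ℕ):ℝ) + 1/2 = ((k:ℝ) + 1/2) + 1 := by push_cast; ring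
    rw [e1, e2, Real.Gamma_add_one (by positivity), Real.Gamma_add_one (by positivity)]
    have hfac : ((k:ℝ) + 3/2) * ((k:ℝ) + 1/2) ≤ ((k:ℝ) + 1) ^ 2 := by nlinarith
    have hfactcast : ((k+1).factorial : ℝ) = ((k:ℝ) + 1) * (k.factorial : ℝ) := by
      rw [Nat.factorial_succ]; push_cast; ring
    calc ((k:ℝ) + 3/2) * Real.Gamma ((k:ℝ) + 3/2) * (((k:ℝ) + 1/2) * Real.Gamma ((k:ℝ) + 1/2))
        = (((k:ℝ) + 3/2) * ((k:ℝ) + 1/2)) * (Real.Gamma ((k:ℝ) + 3/2) * Real.Gamma ((k:ℝ) + 1/2)) := by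
          ring
      _ ≤ (((k:ℝ) + 1) ^ 2) * (2 * ((k.factorial : ℝ)) ^ 2) := by
          apply mul_le_mul hfac ih (by positivity) (by positivity)
      _ = 2 * (((k+1).factorial : ℝ)) ^ 2 := by rw [hfactcast]; ring

lemma sym_ineq {u v c : ℝ} (hu : 0 < u) (hv : 0 < v) (hc : 0 ≤ c) :
    Real.sqrt (u+c) / Real.sqrt (v+c) + Real.sqrt (v+c) / Real.sqrt (u+c)
      ≤ Real.sqrt u / Real.sqrt v + Real.sqrt v / Real.sqrt u := by
  have huc : (0:ℝ) < u + c := by linarith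
  have hvc : (0:ℝ) < v + c := by linarith
  set a := Real.sqrt (u+c) with ha_def
  set b := Real.sqrt (v+c) with hb_def
  set a0 := Real.sqrt u with ha0_def
  set b0 := Real.sqrt v with hb0_def
  have hap : 0 < a := Real.sqrt_pos.mpr huc
  have hbp : 0 < b := Real.sqrt_pos.mpr hvc
  have ha0p : 0 < a0 := Real.sqrt_pos.mpr hu
  have hb0p : 0 < b0 := Real.sqrt_pos.mpr hv
  have ha2 : a ^ 2 = u + c := Real.sq_sqrt huc.le
  have hb2 : b ^ 2 = v + c := Real.sq_sqrt hvc.le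
  have ha02 : a0 ^ 2 = u := Real.sq_sqrt hu.le
  have hb02 : b0 ^ 2 = v := Real.sq_sqrt hv.le
  rw [div_add_div _ _ (ne_of_gt hbp) (ne_of_gt hap), div_add_div _ _ (ne_of_gt hb0p) (ne_of_gt ha0p)]
  rw [div_le_div_iff₀ (by positivity) (by positivity)]
  -- (a² + b²)(b0 a0) ≤ (a0² + b0²)(b a)
  have key : (u + c + (v + c)) ^ 2 * (u * v) ≤ (u + v) ^ 2 * ((u+c) * (v+c)) := by
    nlinarith [sq_nonneg (u - v), mul_pos hu hv, mul_nonneg (mul_nonneg (sq_nonneg (u-v)) hc) (by linarith : (0:ℝ) ≤ u + v + c)]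
  have h1 : a * a + b * b = u + c + (v + c) := by rw [← ha2, ← hb2]; ring
  have h2 : a0 * a0 + b0 * b0 = u + v := by rw [← ha02, ← hb02]; ring
  rw [h1, h2]
  -- goal : (u + c + (v + c)) * (b0 * a0) ≤ (u + v) * (b * a)
  have hq : ((u + c + (v + c)) * (b0 * a0)) ^ 2 ≤ ((u + v) * (b * a)) ^ 2 := by
    have e1 : ((u + c + (v + c)) * (b0 * a0)) ^ 2 = (u + c + (v + c)) ^ 2 * (u * v) := by
      rw [mul_pow, mul_pow, ha02, hb02]; ring
    have e2 : ((u + v) * (b * a)) ^ 2 = (u + v) ^ 2 * ((u+c) * (v+c)) := by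
      rw [mul_pow, mul_pow, ha2, hb2]; ring
    rw [e1, e2]; exact key
  have hL : 0 ≤ (u + c + (v + c)) * (b0 * a0) := by positivity
  have hR : 0 ≤ (u + v) * (b * a) := by positivity
  have := Real.sqrt_le_sqrt hq
  rwa [Real.sqrt_sq hL, Real.sqrt_sq hR] at this

lemma key1d (m : ℕ) {c : ℝ} (hc : 0 ≤ c) :
    (∫ u in Ioi (0:ℝ), u ^ m * Real.exp (-u) * Real.sqrt (u + c)) *
      (∫ u in Ioi (0:ℝ), u ^ m * Real.exp (-u) / Real.sqrt (u + c))
      ≤ 2 * ((m.factorial : ℝ)) ^ 2 := by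
  set μ := volume.restrict (Ioi (0:ℝ)) with hμ
  set q : ℝ → ℝ := fun u => u ^ m * Real.exp (-u) with hq_def
  set F : ℝ → ℝ := fun u => q u * Real.sqrt (u + c) with hF_def
  set G : ℝ → ℝ := fun u => q u / Real.sqrt (u + c) with hG_def
  set F0 : ℝ → ℝ := fun u => q u * Real.sqrt u with hF0_def
  set G0 : ℝ → ℝ := fun u => q u / Real.sqrt u with hG0_def
  have intF : Integrable F μ := integrableOn_qm_sqrt_add m hc
  have intG : Integrable G μ := integrableOn_qm_invsqrt_add m hc
  have intF0 : Integrable F0 μ := integrableOn_qm_sqrt m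
  have intG0 : Integrable G0 μ := integrableOn_qm_invsqrt m
  have h1 : (∫ u, F u ∂μ) * (∫ u, G u ∂μ) = ∫ p : ℝ × ℝ, F p.1 * G p.2 ∂(μ.prod μ) :=
    (integral_prod_mul F G).symm
  have hswap : (∫ p : ℝ × ℝ, G p.1 * F p.2 ∂(μ.prod μ))
      = ∫ p : ℝ × ℝ, F p.1 * G p.2 ∂(μ.prod μ) := by
    rw [← integral_prod_swap (fun p : ℝ × ℝ => G p.1 * F p.2)]
    apply integral_congr_ae (Filter.Eventually.of_forall ?_)
    intro p
    simp [mul_comm]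
  have hsym : (∫ u, F u ∂μ) * (∫ u, G u ∂μ)
      = (1/2) * ∫ p : ℝ × ℝ, (F p.1 * G p.2 + G p.1 * F p.2) ∂(μ.prod μ) := by
    rw [integral_add (intF.mul_prod intG) (intG.mul_prod intF), hswap, h1]; ring
  have hmem : ∀ᵐ p : ℝ × ℝ ∂(μ.prod μ), p.1 ∈ Ioi (0:ℝ) ∧ p.2 ∈ Ioi (0:ℝ) := by
    rw [hμ, Measure.prod_restrict]
    filter_upwards [ae_restrict_mem (measurableSet_Ioi.prod measurableSet_Ioi)] with p hp
    exact hp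
  have hptle : ∀ᵐ p : ℝ × ℝ ∂(μ.prod μ),
      F p.1 * G p.2 + G p.1 * F p.2 ≤ F0 p.1 * G0 p.2 + G0 p.1 * F0 p.2 := by
    filter_upwards [hmem] with p hp
    obtain ⟨hu, hv⟩ := hp
    have hu0 : (0:ℝ) < p.1 := hu
    have hv0 : (0:ℝ) < p.2 := hv
    have hqq : (0:ℝ) ≤ q p.1 * q p.2 := by
      simp only [hq_def]; positivity
    have e1 : F p.1 * G p.2 + G p.1 * F p.2
        = q p.1 * q p.2 * (Real.sqrt (p.1+c) / Real.sqrt (p.2+c)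
            + Real.sqrt (p.2+c) / Real.sqrt (p.1+c)) := by
      simp only [hF_def, hG_def]; ring
    have e2 : F0 p.1 * G0 p.2 + G0 p.1 * F0 p.2
        = q p.1 * q p.2 * (Real.sqrt p.1 / Real.sqrt p.2 + Real.sqrt p.2 / Real.sqrt p.1) := by
      simp only [hF0_def, hG0_def]; ring
    rw [e1, e2]
    exact mul_le_mul_of_nonneg_left (sym_ineq hu0 hv0 hc) hqq
  have hmono : (∫ p : ℝ × ℝ, (F p.1 * G p.2 + G p.1 * F p.2) ∂(μ.prod μ))
      ≤ ∫ p : ℝ × ℝ, (F0 p.1 * G0 p.2 + G0 p.1 * F0 p.2) ∂(μ.prod μ) :=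
    integral_mono_ae ((intF.mul_prod intG).add (intG.mul_prod intF))
      ((intF0.mul_prod intG0).add (intG0.mul_prod intF0)) hptle
  have hval : (∫ p : ℝ × ℝ, (F0 p.1 * G0 p.2 + G0 p.1 * F0 p.2) ∂(μ.prod μ))
      = 2 * (Real.Gamma ((m:ℝ) + 3/2) * Real.Gamma ((m:ℝ) + 1/2)) := by
    rw [integral_add (intF0.mul_prod intG0) (intG0.mul_prod intF0),
      integral_prod_mul, integral_prod_mul]
    have hF0v : (∫ u, F0 u ∂μ) = Real.Gamma ((m:ℝ) + 3/2) := int_qm_sqrt m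
    have hG0v : (∫ u, G0 u ∂μ) = Real.Gamma ((m:ℝ) + 1/2) := int_qm_invsqrt m
    rw [hF0v, hG0v]; ring
  calc (∫ u in Ioi (0:ℝ), u ^ m * Real.exp (-u) * Real.sqrt (u + c)) *
        (∫ u in Ioi (0:ℝ), u ^ m * Real.exp (-u) / Real.sqrt (u + c))
      = (∫ u, F u ∂μ) * (∫ u, G u ∂μ) := rfl
    _ = (1/2) * ∫ p : ℝ × ℝ, (F p.1 * G p.2 + G p.1 * F p.2) ∂(μ.prod μ) := hsym
    _ ≤ (1/2) * (2 * (Real.Gamma ((m:ℝ) + 3/2) * Real.Gamma ((m:ℝ) + 1/2))) := by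
        rw [← hval]; linarith [hmono]
    _ ≤ 2 * ((m.factorial : ℝ)) ^ 2 := by linarith [gamma_prod_le m]

lemma Am_eq {B : ℝ} (hB : 0 < B) (m : ℕ) (z : ℝ) :
    Am B m z = (m.factorial : ℝ)⁻¹ * (Real.sqrt (2/B) *
      ∫ u in Ioi (0:ℝ), u ^ m * Real.exp (-u) * Real.sqrt (u + B * z^2/2)) := by
  have hB0 : B ≠ 0 := ne_of_gt hB
  have hr : (∫ xp : ℝ × ℝ, phiSq B m xp * normx xp z)
      = (m.factorial : ℝ)⁻¹ * ∫ u in Ioi (0:ℝ),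
          u ^ m * Real.exp (-u) * Real.sqrt (2 * u / B + z ^ 2) :=
    phi_reduce hB m (fun s => Real.sqrt (s + z ^ 2))
  rw [Am, hr]
  congr 1
  rw [← integral_const_mul]
  apply setIntegral_congr_fun measurableSet_Ioi
  intro u hu
  have hu0 : (0:ℝ) < u := hu
  simp only
  rw [show 2*u/B + z^2 = (2/B) * (u + B*z^2/2) by field_simp,
    Real.sqrt_mul (by positivity)]
  ring

lemma Vm_eq {B : ℝ} (hB : 0 < B) (m : ℕ) (z : ℝ) :
    Vm B m z = (m.factorial : ℝ)⁻¹ * ((Real.sqrt (2/B))⁻¹ *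
      ∫ u in Ioi (0:ℝ), u ^ m * Real.exp (-u) / Real.sqrt (u + B * z^2/2)) := by
  have hB0 : B ≠ 0 := ne_of_gt hB
  have h0 : (∫ xp : ℝ × ℝ, phiSq B m xp / normx xp z)
      = ∫ xp : ℝ × ℝ, phiSq B m xp * (normx xp z)⁻¹ := by
    simp_rw [div_eq_mul_inv]
  have hr : (∫ xp : ℝ × ℝ, phiSq B m xp * (normx xp z)⁻¹)
      = (m.factorial : ℝ)⁻¹ * ∫ u in Ioi (0:ℝ),
          u ^ m * Real.exp (-u) * (Real.sqrt (2 * u / B + z ^ 2))⁻¹ :=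
    phi_reduce hB m (fun s => (Real.sqrt (s + z ^ 2))⁻¹)
  rw [Vm, h0, hr]
  congr 1
  rw [← integral_const_mul]
  apply setIntegral_congr_fun measurableSet_Ioi
  intro u hu
  have hu0 : (0:ℝ) < u := hu
  simp only
  rw [show 2*u/B + z^2 = (2/B) * (u + B*z^2/2) by field_simp,
    Real.sqrt_mul (by positivity), mul_inv]
  ring

lemma AmVm_le {B : ℝ} (hB : 0 < B) (m : ℕ) (z : ℝ) : Am B m z * Vm B m z ≤ 2 := by
  rw [Am_eq hB, Vm_eq hB]
  set I1 := ∫ u in Ioi (0:ℝ), u ^ m * Real.exp (-u) * Real.sqrt (u + B * z^2/2) with hI1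
  set I2 := ∫ u in Ioi (0:ℝ), u ^ m * Real.exp (-u) / Real.sqrt (u + B * z^2/2) with hI2
  have hs : (0:ℝ) < Real.sqrt (2/B) := Real.sqrt_pos.mpr (by positivity)
  have hf : (0:ℝ) < (m.factorial : ℝ) := by exact_mod_cast m.factorial_pos
  have hkey : I1 * I2 ≤ 2 * ((m.factorial : ℝ)) ^ 2 := key1d m (by positivity)
  have e : (m.factorial : ℝ)⁻¹ * (Real.sqrt (2/B) * I1)
        * ((m.factorial : ℝ)⁻¹ * ((Real.sqrt (2/B))⁻¹ * I2))
      = ((m.factorial : ℝ)⁻¹) ^ 2 * (I1 * I2) := by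
    field_simp
  rw [e]
  calc ((m.factorial : ℝ)⁻¹) ^ 2 * (I1 * I2)
      ≤ ((m.factorial : ℝ)⁻¹) ^ 2 * (2 * ((m.factorial : ℝ)) ^ 2) :=
        mul_le_mul_of_nonneg_left hkey (by positivity)
    _ = 2 := by field_simp

lemma sqrt_add_le' {a b : ℝ} (ha : 0 ≤ a) (hb : 0 ≤ b) :
    Real.sqrt (a + b) ≤ Real.sqrt a + Real.sqrt b := by
  have h := Real.sqrt_le_sqrt (show a + b ≤ (Real.sqrt a + Real.sqrt b) ^ 2 by
    nlinarith [Real.sq_sqrt ha, Real.sq_sqrt hb,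
      mul_nonneg (Real.sqrt_nonneg a) (Real.sqrt_nonneg b)])
  rwa [Real.sqrt_sq (by positivity)] at h

lemma pow_le_exp_aux (m : ℕ) {x : ℝ} (hx : 0 ≤ x) :
    x ^ m ≤ (m.factorial : ℝ) * Real.exp x := by
  have hfac : (0:ℝ) < (m.factorial : ℝ) := by exact_mod_cast m.factorial_pos
  have h := Real.sum_le_exp_of_nonneg hx (m+1)
  have hterm : x ^ m / (m.factorial : ℝ) ≤ Real.exp x := by
    refine le_trans ?_ h
    exact Finset.single_le_sum (f := fun i => x ^ i / (i.factorial : ℝ))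
      (fun i _ => by positivity) (Finset.self_mem_range_succ m)
  rw [div_le_iff₀ hfac] at hterm
  linarith [hterm]

lemma phi_decay {B : ℝ} (hB : 0 < B) (m : ℕ) (z : ℝ) (x : ℝ × ℝ) :
    phiSq B m x * (1 + normx x z)
      ≤ (B / (2*π) * 4 ^ m * 4 * (2 + |z| + 2/B))
        * (Real.exp (-(B/4) * x.1 ^ 2) * Real.exp (-(B/4) * x.2 ^ 2)) := by
  have hπ : (0:ℝ) < π := Real.pi_pos
  set t := x.1 ^ 2 + x.2 ^ 2 with ht
  have ht0 : (0:ℝ) ≤ t := by positivity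
  set s := B * t / 2 with hs
  have hs0 : (0:ℝ) ≤ s := by positivity
  have hfac : (0:ℝ) < (m.factorial : ℝ) := by exact_mod_cast m.factorial_pos
  set K1 : ℝ := B / (2*π) * (1/(m.factorial : ℝ)) with hK1
  have hK1p : 0 < K1 := by rw [hK1]; positivity
  set C2 : ℝ := 2 + |z| + 2/B with hC2
  have hC2p : (0:ℝ) < C2 := by rw [hC2]; positivity
  have hphi : phiSq B m x = K1 * s ^ m * Real.exp (-s) := by
    simp only [phiSq, hK1, hs, ht]
    rw [show -(B * (x.1 ^ 2 + x.2 ^ 2)) / 2 = -(B * (x.1 ^ 2 + x.2 ^ 2) / 2) by ring]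
  have hsm : s ^ m ≤ 4 ^ m * (m.factorial : ℝ) * Real.exp (s/4) := by
    have h1 := pow_le_exp_aux m (show (0:ℝ) ≤ s/4 by positivity)
    have h2 : (s/4) ^ m = s ^ m / 4 ^ m := div_pow s 4 m
    rw [h2, div_le_iff₀ (by positivity)] at h1
    calc s ^ m ≤ (m.factorial : ℝ) * Real.exp (s/4) * 4 ^ m := h1
      _ = 4 ^ m * (m.factorial : ℝ) * Real.exp (s/4) := by ring
  have hnorm : 1 + normx x z ≤ C2 * (1 + s) := by
    have h2 : normx x z ≤ Real.sqrt t + |z| := by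
      have : normx x z = Real.sqrt (t + z^2) := by rw [normx, ht]
      rw [this]
      calc Real.sqrt (t + z^2) ≤ Real.sqrt t + Real.sqrt (z^2) := sqrt_add_le' ht0 (sq_nonneg z)
        _ = Real.sqrt t + |z| := by rw [Real.sqrt_sq_eq_abs]
    have h3 : Real.sqrt t ≤ 1 + t := by
      have := Real.sqrt_le_sqrt (show t ≤ (1+t)^2 by nlinarith)
      rwa [Real.sqrt_sq (by positivity)] at this
    have hts : t = 2*s/B := by rw [hs]; field_simp
    have hsB : (0:ℝ) ≤ 2/B := by positivity
    rw [hC2]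
    have ht2s : t ≤ (2/B) * (1 + s) := by
      rw [hts]; rw [div_mul_eq_mul_div, le_div_iff₀ hB]
      nlinarith [hs0, hB]
    nlinarith [abs_nonneg z, hs0, h2, h3, ht2s]
  have h1s : 1 + s ≤ 4 * Real.exp (s/4) := by
    have := Real.add_one_le_exp (s/4)
    nlinarith [hs0]
  have hnorm2 : 1 + normx x z ≤ C2 * (4 * Real.exp (s/4)) :=
    le_trans hnorm (mul_le_mul_of_nonneg_left h1s hC2p.le)
  have hL : phiSq B m x * (1 + normx x z)
      ≤ (K1 * (4 ^ m * (m.factorial : ℝ) * Real.exp (s/4)) * Real.exp (-s))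
        * (C2 * (4 * Real.exp (s/4))) := by
    rw [hphi]
    apply mul_le_mul ?_ hnorm2 ?_ ?_
    · apply mul_le_mul_of_nonneg_right ?_ (Real.exp_pos _).le
      exact mul_le_mul_of_nonneg_left hsm hK1p.le
    · have := normx_nonneg x z; linarith
    · positivity
  have hE : Real.exp (s/4) * Real.exp (-s) * Real.exp (s/4) = Real.exp (-(s/2)) := by
    rw [← Real.exp_add, ← Real.exp_add]
    congr 1; ring
  have hsplit : Real.exp (-(s/2)) = Real.exp (-(B/4) * x.1 ^ 2) * Real.exp (-(B/4) * x.2 ^ 2) := by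
    rw [← Real.exp_add]
    congr 1
    rw [hs, ht]; ring
  have hfinal : (K1 * (4 ^ m * (m.factorial : ℝ) * Real.exp (s/4)) * Real.exp (-s))
        * (C2 * (4 * Real.exp (s/4)))
      = (B / (2*π) * 4 ^ m * 4 * C2) * Real.exp (-(s/2)) := by
    rw [← hE, hK1]
    field_simp
  rw [hfinal, hsplit] at hL
  exact hL

lemma gauss_prod_integrable {B : ℝ} (hB : 0 < B) :
    Integrable (fun x : ℝ × ℝ => Real.exp (-(B/4) * x.1 ^ 2) * Real.exp (-(B/4) * x.2 ^ 2)) := by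
  have h1 : Integrable (fun a : ℝ => Real.exp (-(B/4) * a ^ 2)) :=
    integrable_exp_neg_mul_sq (show (0:ℝ) < B/4 by positivity)
  have := h1.mul_prod h1
  rwa [← Measure.volume_eq_prod] at this

lemma phi_normx_integrable {B : ℝ} (hB : 0 < B) (m : ℕ) (z : ℝ) :
    Integrable (fun x : ℝ × ℝ => phiSq B m x * normx x z) := by
  apply ((gauss_prod_integrable hB).const_mul (B / (2*π) * 4 ^ m * 4 * (2 + |z| + 2/B))).mono'
  · apply Measurable.aestronglyMeasurable
    unfold phiSq normx
    fun_prop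
  · apply Filter.Eventually.of_forall
    intro x
    have h0 : (0:ℝ) ≤ phiSq B m x * normx x z :=
      mul_nonneg (phiSq_nonneg hB m x) (normx_nonneg x z)
    rw [Real.norm_of_nonneg h0]
    calc phiSq B m x * normx x z ≤ phiSq B m x * (1 + normx x z) := by
          nlinarith [phiSq_nonneg hB m x]
      _ ≤ _ := phi_decay hB m z x
  
lemma phiSq_integrable {B : ℝ} (hB : 0 < B) (m : ℕ) : Integrable (phiSq B m) := by
  apply ((gauss_prod_integrable hB).const_mul (B / (2*π) * 4 ^ m * 4 * (2 + |(0:ℝ)| + 2/B))).mono'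
  · exact (phiSq_continuous B m).measurable.aestronglyMeasurable
  · apply Filter.Eventually.of_forall
    intro x
    rw [Real.norm_of_nonneg (phiSq_nonneg hB m x)]
    calc phiSq B m x ≤ phiSq B m x * (1 + normx x 0) := by
          nlinarith [phiSq_nonneg hB m x, normx_nonneg x 0]
      _ ≤ _ := phi_decay hB m 0 x

lemma phi_int_one {B : ℝ} (hB : 0 < B) (m : ℕ) : (∫ x : ℝ × ℝ, phiSq B m x) = 1 := by
  have hfac : (0:ℝ) < (m.factorial : ℝ) := by exact_mod_cast m.factorial_pos
  have hr : (∫ x : ℝ × ℝ, phiSq B m x * 1)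
      = (m.factorial : ℝ)⁻¹ * ∫ u in Ioi (0:ℝ), u ^ m * Real.exp (-u) * 1 :=
    phi_reduce hB m (fun _ => 1)
  simp only [mul_one] at hr
  rw [hr, int_qm]
  field_simp

lemma Vm_nonneg {B : ℝ} (hB : 0 < B) (m : ℕ) (z : ℝ) : 0 ≤ Vm B m z :=
  integral_nonneg fun x => div_nonneg (phiSq_nonneg hB m x) (normx_nonneg x z)

lemma Am_nonneg {B : ℝ} (hB : 0 < B) (m : ℕ) (z : ℝ) : 0 ≤ Am B m z :=
  integral_nonneg fun x => mul_nonneg (phiSq_nonneg hB m x) (normx_nonneg x z)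

lemma Am_meas (B : ℝ) (m : ℕ) : Measurable (Am B m) := by
  have h1 : StronglyMeasurable fun p : ℝ × (ℝ × ℝ) => phiSq B m p.2 * normx p.2 p.1 := by
    apply Measurable.stronglyMeasurable
    unfold phiSq normx
    fun_prop
  exact h1.integral_prod_right'.measurable

lemma Vmn_meas (B : ℝ) (m n : ℕ) : Measurable (Vmn B m n) := by
  have h1 : StronglyMeasurable fun q : (ℝ × (ℝ × ℝ)) × (ℝ × ℝ) =>
      phiSq B m q.1.2 * phiSq B n q.2 / normx (q.1.2.1 - q.2.1, q.1.2.2 - q.2.2) q.1.1 := by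
    apply Measurable.stronglyMeasurable
    unfold phiSq normx
    fun_prop
  exact (h1.integral_prod_right'.integral_prod_right').measurable

lemma Vmn_nonneg {B : ℝ} (hB : 0 < B) (m n : ℕ) (w : ℝ) : 0 ≤ Vmn B m n w :=
  integral_nonneg fun x => integral_nonneg fun y =>
    div_nonneg (mul_nonneg (phiSq_nonneg hB m x) (phiSq_nonneg hB n y)) (normx_nonneg _ _)

lemma vmn_kernel_integrable {B : ℝ} (hB : 0 < B) (m n : ℕ) {w : ℝ} (hw : w ≠ 0) :
    Integrable (fun p : (ℝ × ℝ) × (ℝ × ℝ) =>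
      phiSq B m p.1 * phiSq B n p.2 / normx (p.1.1 - p.2.1, p.1.2 - p.2.2) w) := by
  have hbase : Integrable (fun p : (ℝ × ℝ) × (ℝ × ℝ) => phiSq B m p.1 * phiSq B n p.2) := by
    have := (phiSq_integrable hB m).mul_prod (phiSq_integrable hB n)
    rwa [← Measure.volume_eq_prod] at this
  apply (hbase.div_const |w|).mono'
  · apply Measurable.aestronglyMeasurable
    unfold phiSq normx
    fun_prop
  · apply Filter.Eventually.of_forall
    intro p
    have hpp : (0:ℝ) ≤ phiSq B m p.1 * phiSq B n p.2 :=
      mul_nonneg (phiSq_nonneg hB m p.1) (phiSq_nonneg hB n p.2)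
    have hden : |w| ≤ normx (p.1.1 - p.2.1, p.1.2 - p.2.2) w := abs_le_normx _ _
    have hwpos : (0:ℝ) < |w| := abs_pos.mpr hw
    rw [Real.norm_of_nonneg (div_nonneg hpp (normx_nonneg _ _))]
    exact div_le_div_of_nonneg_left hpp hwpos hden

lemma vmn_uw_integrable {B : ℝ} (hB : 0 < B) (m n : ℕ) (z z' : ℝ) :
    Integrable (fun p : (ℝ × ℝ) × (ℝ × ℝ) =>
      (phiSq B m p.1 * phiSq B n p.2) * normx (p.1.1 - p.2.1, p.1.2 - p.2.2) (z - z')) := by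
  have hgi : Integrable (fun p : (ℝ × ℝ) × (ℝ × ℝ) =>
      (phiSq B m p.1 * normx p.1 z) * phiSq B n p.2
        + phiSq B m p.1 * (phiSq B n p.2 * normx p.2 z')) := by
    have h1 := (phi_normx_integrable hB m z).mul_prod (phiSq_integrable hB n)
    have h2 := (phiSq_integrable hB m).mul_prod (phi_normx_integrable hB n z')
    rw [← Measure.volume_eq_prod] at h1 h2
    exact h1.add h2
  apply hgi.mono'
  · apply Measurable.aestronglyMeasurable
    unfold phiSq normx
    fun_prop
  · apply Filter.Eventually.of_forall
    intro p
    have hpp : (0:ℝ) ≤ phiSq B m p.1 * phiSq B n p.2 :=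
      mul_nonneg (phiSq_nonneg hB m p.1) (phiSq_nonneg hB n p.2)
    rw [Real.norm_of_nonneg (mul_nonneg hpp (normx_nonneg _ _))]
    have htr := normx_le_add p.1 p.2 z z'
    calc (phiSq B m p.1 * phiSq B n p.2) * normx (p.1.1 - p.2.1, p.1.2 - p.2.2) (z - z')
        ≤ (phiSq B m p.1 * phiSq B n p.2) * (normx p.1 z + normx p.2 z') :=
          mul_le_mul_of_nonneg_left htr hpp
      _ = (phiSq B m p.1 * normx p.1 z) * phiSq B n p.2
            + phiSq B m p.1 * (phiSq B n p.2 * normx p.2 z') := by ring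

lemma one_le_mul_integral {α : Type*} [MeasurableSpace α] {μ : Measure α}
    {q u : α → ℝ} (hqm : AEMeasurable q μ) (hum : AEMeasurable u μ)
    (hq0 : 0 ≤ᵐ[μ] q) (hu0 : ∀ᵐ x ∂μ, 0 < u x)
    (h1 : Integrable (fun x => q x / u x) μ) (h2 : Integrable (fun x => q x * u x) μ)
    (hq1 : (∫ x, q x ∂μ) = 1) :
    1 ≤ (∫ x, q x / u x ∂μ) * ∫ x, q x * u x ∂μ := by
  set f : α → ℝ := fun x => Real.sqrt (q x / u x) with hf_def
  set g : α → ℝ := fun x => Real.sqrt (q x * u x) with hg_def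
  have hfm : AEStronglyMeasurable f μ :=
    (Real.continuous_sqrt.measurable.comp_aemeasurable (hqm.div hum)).aestronglyMeasurable
  have hgm : AEStronglyMeasurable g μ :=
    (Real.continuous_sqrt.measurable.comp_aemeasurable (hqm.mul hum)).aestronglyMeasurable
  have hf2 : (fun x => f x ^ 2) =ᵐ[μ] fun x => q x / u x := by
    filter_upwards [hq0, hu0] with x hq hu
    exact Real.sq_sqrt (div_nonneg hq hu.le)
  have hg2 : (fun x => g x ^ 2) =ᵐ[μ] fun x => q x * u x := by
    filter_upwards [hq0, hu0] with x hq hu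
    exact Real.sq_sqrt (mul_nonneg hq hu.le)
  have hmf : MemLp f 2 μ := (memLp_two_iff_integrable_sq hfm).mpr (h1.congr hf2.symm)
  have hmg : MemLp g 2 μ := (memLp_two_iff_integrable_sq hgm).mpr (h2.congr hg2.symm)
  have hconj : (2:ℝ).HolderConjugate 2 := Real.HolderConjugate.two_two
  have h2e : ENNReal.ofReal (2:ℝ) = 2 := by
    rw [show (2:ℝ) = ((2:ℕ):ℝ) by norm_num, ENNReal.ofReal_natCast]; norm_num
  have hholder := integral_mul_le_Lp_mul_Lq_of_nonneg hconj
    (Filter.Eventually.of_forall fun x => Real.sqrt_nonneg _)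
    (Filter.Eventually.of_forall fun x => Real.sqrt_nonneg _)
    (h2e ▸ hmf) (h2e ▸ hmg)
  have hfg : (fun x => f x * g x) =ᵐ[μ] q := by
    filter_upwards [hq0, hu0] with x hq hu
    rw [hf_def, hg_def]
    dsimp only
    rw [← Real.sqrt_mul (div_nonneg hq hu.le)]
    rw [show q x / u x * (q x * u x) = (q x)^2 * (u x / u x) by ring,
      div_self (ne_of_gt hu), mul_one, Real.sqrt_sq hq]
  have hfgint : (∫ x, f x * g x ∂μ) = 1 := by
    rw [integral_congr_ae hfg, hq1]
  have hrpow2 : ∀ y : ℝ, y ^ (2:ℝ) = y ^ (2:ℕ) := by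
    intro y
    rw [show (2:ℝ) = ((2:ℕ):ℝ) by norm_num, Real.rpow_natCast]
  have hI1 : (∫ x, f x ^ (2:ℝ) ∂μ) = ∫ x, q x / u x ∂μ := by
    rw [show (fun x => f x ^ (2:ℝ)) = fun x => f x ^ (2:ℕ) from funext fun x => hrpow2 _]
    exact integral_congr_ae hf2
  have hI2 : (∫ x, g x ^ (2:ℝ) ∂μ) = ∫ x, q x * u x ∂μ := by
    rw [show (fun x => g x ^ (2:ℝ)) = fun x => g x ^ (2:ℕ) from funext fun x => hrpow2 _]
    exact integral_congr_ae hg2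
  rw [hfgint, hI1, hI2] at hholder
  have hI1n : (0:ℝ) ≤ ∫ x, q x / u x ∂μ := by
    apply integral_nonneg_of_ae
    filter_upwards [hq0, hu0] with x hq hu
    exact div_nonneg hq hu.le
  have hI2n : (0:ℝ) ≤ ∫ x, q x * u x ∂μ := by
    apply integral_nonneg_of_ae
    filter_upwards [hq0, hu0] with x hq hu
    exact mul_nonneg hq hu.le
  rw [show (1:ℝ)/2 = (2:ℝ)⁻¹ by norm_num] at hholder
  have hs1 : (∫ x, q x / u x ∂μ) ^ ((2:ℝ)⁻¹) = Real.sqrt (∫ x, q x / u x ∂μ) := by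
    rw [Real.sqrt_eq_rpow]; norm_num
  have hs2 : (∫ x, q x * u x ∂μ) ^ ((2:ℝ)⁻¹) = Real.sqrt (∫ x, q x * u x ∂μ) := by
    rw [Real.sqrt_eq_rpow]; norm_num
  rw [hs1, hs2] at hholder
  nlinarith [Real.sqrt_nonneg (∫ x, q x / u x ∂μ), Real.sqrt_nonneg (∫ x, q x * u x ∂μ),
    Real.sq_sqrt hI1n, Real.sq_sqrt hI2n, hholder,
    sq_nonneg (Real.sqrt (∫ x, q x / u x ∂μ) * Real.sqrt (∫ x, q x * u x ∂μ) - 1)]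

lemma Vmn_prod {B : ℝ} (hB : 0 < B) (m n : ℕ) {w : ℝ} (hw : w ≠ 0) :
    Vmn B m n w = ∫ p : (ℝ × ℝ) × (ℝ × ℝ),
      phiSq B m p.1 * phiSq B n p.2 / normx (p.1.1 - p.2.1, p.1.2 - p.2.2) w := by
  have h := vmn_kernel_integrable hB m n hw
  rw [Measure.volume_eq_prod] at h
  rw [Vmn]
  conv_rhs => rw [Measure.volume_eq_prod]
  rw [integral_prod _ h]

lemma Vmn_symm {B : ℝ} (hB : 0 < B) (m n : ℕ) {w : ℝ} (hw : w ≠ 0) :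
    Vmn B n m (-w) = Vmn B m n w := by
  have hnw : (-w) ≠ 0 := neg_ne_zero.mpr hw
  rw [Vmn_prod hB n m hnw, Vmn_prod hB m n hw]
  rw [Measure.volume_eq_prod]
  rw [← integral_prod_swap (fun p : (ℝ × ℝ) × (ℝ × ℝ) =>
    phiSq B n p.1 * phiSq B m p.2 / normx (p.1.1 - p.2.1, p.1.2 - p.2.2) (-w))]
  rw [← Measure.volume_eq_prod]
  apply integral_congr_ae (Filter.Eventually.of_forall ?_)
  intro p
  simp only [Prod.snd_swap, Prod.fst_swap]
  have hnx : normx (p.2.1 - p.1.1, p.2.2 - p.1.2) (-w)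
      = normx (p.1.1 - p.2.1, p.1.2 - p.2.2) w := by
    unfold normx
    congr 1
    ring
  rw [hnx, mul_comm]

lemma one_le_Vmn_mul {B : ℝ} (hB : 0 < B) (m n : ℕ) {z z' : ℝ} (hzz : z ≠ z') :
    1 ≤ Vmn B m n (z - z') * (Am B m z + Am B n z') := by
  have hw : z - z' ≠ 0 := sub_ne_zero.mpr hzz
  set q : (ℝ × ℝ) × (ℝ × ℝ) → ℝ := fun p => phiSq B m p.1 * phiSq B n p.2 with hq_def
  set u : (ℝ × ℝ) × (ℝ × ℝ) → ℝ :=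
    fun p => normx (p.1.1 - p.2.1, p.1.2 - p.2.2) (z - z') with hu_def
  have hq1 : (∫ p, q p) = 1 := by
    rw [hq_def, Measure.volume_eq_prod, integral_prod_mul, phi_int_one hB m, phi_int_one hB n]
    norm_num
  have hu0 : ∀ p, 0 < u p := fun p =>
    lt_of_lt_of_le (abs_pos.mpr hw) (abs_le_normx _ _)
  have hqm : AEMeasurable q volume := by
    apply Measurable.aemeasurable
    simp only [hq_def]
    unfold phiSq
    fun_prop
  have hum : AEMeasurable u volume := by
    apply Measurable.aemeasurable
    simp only [hu_def]
    unfold normx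
    fun_prop
  have h1 : Integrable (fun p => q p / u p) := vmn_kernel_integrable hB m n hw
  have h2 : Integrable (fun p => q p * u p) := vmn_uw_integrable hB m n z z'
  have hcs : 1 ≤ (∫ p, q p / u p) * ∫ p, q p * u p :=
    one_le_mul_integral hqm hum
      (Filter.Eventually.of_forall fun p =>
        mul_nonneg (phiSq_nonneg hB m p.1) (phiSq_nonneg hB n p.2))
      (Filter.Eventually.of_forall hu0) h1 h2 hq1
  have hVeq : (∫ p, q p / u p) = Vmn B m n (z - z') := (Vmn_prod hB m n hw).symm
  have hIle : (∫ p, q p * u p) ≤ Am B m z + Am B n z' := by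
    have hsum : Integrable (fun p : (ℝ × ℝ) × (ℝ × ℝ) =>
        (phiSq B m p.1 * normx p.1 z) * phiSq B n p.2
          + phiSq B m p.1 * (phiSq B n p.2 * normx p.2 z')) := by
      have ha := (phi_normx_integrable hB m z).mul_prod (phiSq_integrable hB n)
      have hb := (phiSq_integrable hB m).mul_prod (phi_normx_integrable hB n z')
      rw [← Measure.volume_eq_prod] at ha hb
      exact ha.add hb
    have hmono : (∫ p, q p * u p) ≤ ∫ p : (ℝ × ℝ) × (ℝ × ℝ),
        ((phiSq B m p.1 * normx p.1 z) * phiSq B n p.2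
          + phiSq B m p.1 * (phiSq B n p.2 * normx p.2 z')) := by
      apply integral_mono h2 hsum
      intro p
      have hpp : (0:ℝ) ≤ q p :=
        mul_nonneg (phiSq_nonneg hB m p.1) (phiSq_nonneg hB n p.2)
      have htr := normx_le_add p.1 p.2 z z'
      calc q p * u p ≤ q p * (normx p.1 z + normx p.2 z') :=
            mul_le_mul_of_nonneg_left htr hpp
        _ = (phiSq B m p.1 * normx p.1 z) * phiSq B n p.2
              + phiSq B m p.1 * (phiSq B n p.2 * normx p.2 z') := by
            rw [hq_def]; ring
    have hval : (∫ p : (ℝ × ℝ) × (ℝ × ℝ),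
        ((phiSq B m p.1 * normx p.1 z) * phiSq B n p.2
          + phiSq B m p.1 * (phiSq B n p.2 * normx p.2 z')))
        = Am B m z + Am B n z' := by
      have ha := (phi_normx_integrable hB m z).mul_prod (phiSq_integrable hB n)
      have hb := (phiSq_integrable hB m).mul_prod (phi_normx_integrable hB n z')
      rw [← Measure.volume_eq_prod] at ha hb
      rw [integral_add ha hb]
      congr 1
      · rw [Measure.volume_eq_prod,
          integral_prod_mul (fun x : ℝ × ℝ => phiSq B m x * normx x z) (phiSq B n),
          phi_int_one hB n, mul_one, Am]
      · rw [Measure.volume_eq_prod,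
          integral_prod_mul (phiSq B m) (fun y : ℝ × ℝ => phiSq B n y * normx y z'),
          phi_int_one hB m, one_mul, Am]
    linarith [hmono, hval.le, hval.ge]
  calc (1:ℝ) ≤ (∫ p, q p / u p) * ∫ p, q p * u p := hcs
    _ = Vmn B m n (z - z') * ∫ p, q p * u p := by rw [hVeq]
    _ ≤ Vmn B m n (z - z') * (Am B m z + Am B n z') :=
        mul_le_mul_of_nonneg_left hIle (Vmn_nonneg hB m n _)

end Stmt9

/-- a solution of the DSTF Thomas–Fermi equations with zero chemical
potential (the unconstrained minimizer) has total mass `N_c ≤ 4Z`. -/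
theorem stmt9 (Z B : ℝ) (hZ : 0 < Z) (hB : 0 < B)
    (ρ : ℕ → ℝ → ℝ) (hmeas : ∀ m, Measurable (ρ m)) (hnn : ∀ m z, 0 ≤ ρ m z)
    (hL1 : ∀ m, Integrable (ρ m))
    (hconv : ∀ m, ∀ᵐ z : ℝ ∂volume,
      (∀ n, Integrable (fun z' => Vmn B m n (z - z') * ρ n z')) ∧
      Summable (fun n => ∫ z' : ℝ, Vmn B m n (z - z') * ρ n z'))
    (hTF : ∀ m, ∀ᵐ z : ℝ ∂volume,
      3 * kappa * ρ m z ^ 2 =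
        max (Z * Vm B m z - ∑' n : ℕ, ∫ z' : ℝ, Vmn B m n (z - z') * ρ n z') 0) :
    (∑' m : ℕ, ∫⁻ z : ℝ, ENNReal.ofReal (ρ m z)) ≤ ENNReal.ofReal (4 * Z) := by
  classical
  have hκ : (0:ℝ) < kappa := by rw [kappa]; positivity
  set I : ℕ → ℝ := fun m => ∫ z : ℝ, ρ m z with hI_def
  have hInn : ∀ m, 0 ≤ I m := fun m => integral_nonneg (hnn m)
  have hgoal_eq : ∀ m, (∫⁻ z : ℝ, ENNReal.ofReal (ρ m z)) = ENNReal.ofReal (I m) := fun m =>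
    (ofReal_integral_eq_lintegral_ofReal (hL1 m) (Filter.Eventually.of_forall (hnn m))).symm
  rw [tsum_congr hgoal_eq, ENNReal.tsum_eq_iSup_sum]
  apply iSup_le
  intro S
  set F : ℕ → ℕ → ℝ × ℝ → ℝ := fun m n p =>
    Vmn B m n (p.1 - p.2) * ρ n p.2 * (Stmt9.Am B m p.1 * ρ m p.1) with hF_def
  have hFnn : ∀ m n p, 0 ≤ F m n p := fun m n p =>
    mul_nonneg (mul_nonneg (Stmt9.Vmn_nonneg hB m n _) (hnn n _))
      (mul_nonneg (Stmt9.Am_nonneg hB m _) (hnn m _))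
  have hFmeas : ∀ m n, Measurable fun p : ℝ × ℝ => ENNReal.ofReal (F m n p) := by
    intro m n
    apply Measurable.ennreal_ofReal
    simp only [hF_def]
    exact (((Stmt9.Vmn_meas B m n).comp (measurable_fst.sub measurable_snd)).mul
      ((hmeas n).comp measurable_snd)).mul
      (((Stmt9.Am_meas B m).comp measurable_fst).mul ((hmeas m).comp measurable_fst))
  set D : ℕ → ℕ → ℝ≥0∞ := fun m n =>
    ∫⁻ z : ℝ, ∫⁻ z' : ℝ, ENNReal.ofReal (F m n (z, z')) with hD_def
  have hDprod : ∀ m n, D m n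
      = ∫⁻ p : ℝ × ℝ, ENNReal.ofReal (F m n p) ∂((volume : Measure ℝ).prod volume) := by
    intro m n
    rw [hD_def]
    exact (lintegral_prod _ ((hFmeas m n).aemeasurable)).symm
  -- Upper bound on each row of D
  have hUpper : ∀ m, (∑ n ∈ S, D m n) ≤ ENNReal.ofReal (2 * Z * I m) := by
    intro m
    have hmeasg : ∀ n : ℕ, Measurable fun z : ℝ =>
        ∫⁻ z' : ℝ, ENNReal.ofReal (F m n (z, z')) := fun n =>
      (hFmeas m n).lintegral_prod_right'
    have hmain : (∫⁻ z : ℝ, ∑ n ∈ S, ∫⁻ z' : ℝ, ENNReal.ofReal (F m n (z, z')))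
        ≤ ∫⁻ z : ℝ, ENNReal.ofReal (2 * Z * ρ m z) := by
      apply lintegral_mono_ae
      filter_upwards [hconv m, hTF m] with z hc htf
      have hJnn : ∀ n, 0 ≤ ∫ z' : ℝ, Vmn B m n (z - z') * ρ n z' := fun n =>
        integral_nonneg fun z' => mul_nonneg (Stmt9.Vmn_nonneg hB m n _) (hnn n z')
      have hC : 0 ≤ Stmt9.Am B m z * ρ m z :=
        mul_nonneg (Stmt9.Am_nonneg hB m z) (hnn m z)
      have hstep : ∀ n : ℕ, (∫⁻ z' : ℝ, ENNReal.ofReal (F m n (z, z')))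
          = ENNReal.ofReal (∫ z' : ℝ, Vmn B m n (z - z') * ρ n z')
            * ENNReal.ofReal (Stmt9.Am B m z * ρ m z) := by
        intro n
        have hmeasb : Measurable (fun z' : ℝ => ENNReal.ofReal (Vmn B m n (z - z') * ρ n z')) := by
          apply Measurable.ennreal_ofReal
          exact ((Stmt9.Vmn_meas B m n).comp (measurable_const.sub measurable_id)).mul (hmeas n)
        calc (∫⁻ z' : ℝ, ENNReal.ofReal (F m n (z, z')))
            = ∫⁻ z' : ℝ, ENNReal.ofReal (Vmn B m n (z - z') * ρ n z')
                * ENNReal.ofReal (Stmt9.Am B m z * ρ m z) := by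
              apply lintegral_congr
              intro z'
              rw [hF_def]
              dsimp only
              rw [ENNReal.ofReal_mul (mul_nonneg (Stmt9.Vmn_nonneg hB m n _) (hnn n z'))]
          _ = (∫⁻ z' : ℝ, ENNReal.ofReal (Vmn B m n (z - z') * ρ n z'))
                * ENNReal.ofReal (Stmt9.Am B m z * ρ m z) :=
              lintegral_mul_const _ hmeasb
          _ = ENNReal.ofReal (∫ z' : ℝ, Vmn B m n (z - z') * ρ n z')
                * ENNReal.ofReal (Stmt9.Am B m z * ρ m z) := by
              rw [ofReal_integral_eq_lintegral_ofReal (hc.1 n)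
                (Filter.Eventually.of_forall fun z' =>
                  mul_nonneg (Stmt9.Vmn_nonneg hB m n _) (hnn n z'))]
      have hkey : (∑ n ∈ S, ∫ z' : ℝ, Vmn B m n (z - z') * ρ n z')
          * (Stmt9.Am B m z * ρ m z) ≤ 2 * Z * ρ m z := by
        rcases (hnn m z).eq_or_lt with h0 | hpos
        · rw [← h0, mul_zero, mul_zero, mul_zero]
        · have hmaxpos : 0 < 3 * kappa * ρ m z ^ 2 := by positivity
          have hXpos : 0 < Z * Vm B m z
              - ∑' n : ℕ, ∫ z' : ℝ, Vmn B m n (z - z') * ρ n z' := by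
            by_contra hcon
            push_neg at hcon
            rw [max_eq_right hcon] at htf
            linarith
          have hT_le : (∑' n : ℕ, ∫ z' : ℝ, Vmn B m n (z - z') * ρ n z') ≤ Z * Vm B m z := by
            nlinarith [htf, hmaxpos, le_max_left (Z * Vm B m z
              - ∑' n : ℕ, ∫ z' : ℝ, Vmn B m n (z - z') * ρ n z') 0]
          have hSle : (∑ n ∈ S, ∫ z' : ℝ, Vmn B m n (z - z') * ρ n z')
              ≤ ∑' n : ℕ, ∫ z' : ℝ, Vmn B m n (z - z') * ρ n z' :=
            Summable.sum_le_tsum S (fun n _ => hJnn n) hc.2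
          have hAV := Stmt9.AmVm_le hB m z
          have hA := Stmt9.Am_nonneg hB m z
          have hV := Stmt9.Vm_nonneg hB m z
          calc (∑ n ∈ S, ∫ z' : ℝ, Vmn B m n (z - z') * ρ n z') * (Stmt9.Am B m z * ρ m z)
              ≤ (Z * Vm B m z) * (Stmt9.Am B m z * ρ m z) := by
                apply mul_le_mul_of_nonneg_right (le_trans hSle hT_le)
                  (mul_nonneg hA (hnn m z))
            _ = Z * (Stmt9.Am B m z * Vm B m z) * ρ m z := by ring
            _ ≤ Z * 2 * ρ m z := by
                apply mul_le_mul_of_nonneg_right ?_ (hnn m z)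
                exact mul_le_mul_of_nonneg_left hAV hZ.le
            _ = 2 * Z * ρ m z := by ring
      calc (∑ n ∈ S, ∫⁻ z' : ℝ, ENNReal.ofReal (F m n (z, z')))
          = ∑ n ∈ S, ENNReal.ofReal (∫ z' : ℝ, Vmn B m n (z - z') * ρ n z')
              * ENNReal.ofReal (Stmt9.Am B m z * ρ m z) :=
            Finset.sum_congr rfl fun n _ => hstep n
        _ = ENNReal.ofReal (∑ n ∈ S, ∫ z' : ℝ, Vmn B m n (z - z') * ρ n z')
              * ENNReal.ofReal (Stmt9.Am B m z * ρ m z) := by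
            rw [← Finset.sum_mul, ← ENNReal.ofReal_sum_of_nonneg (fun n _ => hJnn n)]
        _ = ENNReal.ofReal ((∑ n ∈ S, ∫ z' : ℝ, Vmn B m n (z - z') * ρ n z')
              * (Stmt9.Am B m z * ρ m z)) :=
            (ENNReal.ofReal_mul (Finset.sum_nonneg fun n _ => hJnn n)).symm
        _ ≤ ENNReal.ofReal (2 * Z * ρ m z) := ENNReal.ofReal_le_ofReal hkey
    calc (∑ n ∈ S, D m n)
        = ∫⁻ z : ℝ, ∑ n ∈ S, ∫⁻ z' : ℝ, ENNReal.ofReal (F m n (z, z')) :=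
          (lintegral_finset_sum S fun n _ => hmeasg n).symm
      _ ≤ ∫⁻ z : ℝ, ENNReal.ofReal (2 * Z * ρ m z) := hmain
      _ = ENNReal.ofReal (∫ z : ℝ, 2 * Z * ρ m z) :=
          (ofReal_integral_eq_lintegral_ofReal ((hL1 m).const_mul (2 * Z))
            (Filter.Eventually.of_forall fun z =>
              mul_nonneg (by positivity) (hnn m z))).symm
      _ = ENNReal.ofReal (2 * Z * I m) := by rw [integral_const_mul, hI_def]
  -- a.e. off-diagonal
  have hdiag : ∀ᵐ p : ℝ × ℝ ∂((volume : Measure ℝ).prod volume), p.1 ≠ p.2 := by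
    have hmeasD : MeasurableSet {p : ℝ × ℝ | p.1 = p.2} :=
      (isClosed_eq continuous_fst continuous_snd).measurableSet
    have hz : ((volume : Measure ℝ).prod volume) {p : ℝ × ℝ | p.1 = p.2} = 0 := by
      rw [Measure.prod_apply hmeasD]
      have hpre : ∀ x : ℝ, (Prod.mk x ⁻¹' {p : ℝ × ℝ | p.1 = p.2}) = {x} := by
        intro x; ext y; simp [eq_comm]
      simp_rw [hpre, measure_singleton]
      simp
    filter_upwards [measure_eq_zero_iff_ae_notMem.mp hz] with p hp
    simpa using hp
  -- Lower bound
  have hLow : ∀ m n, ENNReal.ofReal (I m) * ENNReal.ofReal (I n) ≤ D m n + D n m := by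
    intro m n
    have hswap : D n m = ∫⁻ p : ℝ × ℝ, ENNReal.ofReal (F n m (p.2, p.1))
        ∂((volume : Measure ℝ).prod volume) := by
      rw [hDprod n m, ← lintegral_prod_swap (fun p : ℝ × ℝ => ENNReal.ofReal (F n m p))]
      apply lintegral_congr
      intro p
      rfl
    have hswapmeas : Measurable fun p : ℝ × ℝ => ENNReal.ofReal (F n m (p.2, p.1)) :=
      (hFmeas n m).comp (measurable_snd.prodMk measurable_fst)
    have hadd : D m n + D n m = ∫⁻ p : ℝ × ℝ,
        (ENNReal.ofReal (F m n p) + ENNReal.ofReal (F n m (p.2, p.1)))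
        ∂((volume : Measure ℝ).prod volume) := by
      rw [hDprod m n, hswap, ← lintegral_add_left (hFmeas m n)]
    have hlow2 : (∫⁻ p : ℝ × ℝ, ENNReal.ofReal (ρ m p.1 * ρ n p.2)
        ∂((volume : Measure ℝ).prod volume)) ≤ D m n + D n m := by
      rw [hadd]
      apply lintegral_mono_ae
      filter_upwards [hdiag] with p hne
      have hsym : Vmn B n m (p.2 - p.1) = Vmn B m n (p.1 - p.2) := by
        rw [show p.2 - p.1 = -(p.1 - p.2) by ring]
        exact Stmt9.Vmn_symm hB m n (sub_ne_zero.mpr hne)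
      have hone := Stmt9.one_le_Vmn_mul hB m n hne
      have hsumF : F m n p + F n m (p.2, p.1)
          = Vmn B m n (p.1 - p.2) * (Stmt9.Am B m p.1 + Stmt9.Am B n p.2)
            * (ρ m p.1 * ρ n p.2) := by
        rw [hF_def]
        dsimp only
        rw [hsym]
        ring
      have hρρ : 0 ≤ ρ m p.1 * ρ n p.2 := mul_nonneg (hnn m _) (hnn n _)
      rw [← ENNReal.ofReal_add (hFnn m n p) (hFnn n m (p.2, p.1)), hsumF]
      apply ENNReal.ofReal_le_ofReal
      calc ρ m p.1 * ρ n p.2 = 1 * (ρ m p.1 * ρ n p.2) := (one_mul _).symm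
        _ ≤ Vmn B m n (p.1 - p.2) * (Stmt9.Am B m p.1 + Stmt9.Am B n p.2)
              * (ρ m p.1 * ρ n p.2) :=
            mul_le_mul_of_nonneg_right hone hρρ
    have hval : (∫⁻ p : ℝ × ℝ, ENNReal.ofReal (ρ m p.1 * ρ n p.2)
        ∂((volume : Measure ℝ).prod volume))
        = ENNReal.ofReal (I m) * ENNReal.ofReal (I n) := by
      have e1 : (fun p : ℝ × ℝ => ENNReal.ofReal (ρ m p.1 * ρ n p.2))
          = fun p : ℝ × ℝ => ENNReal.ofReal (ρ m p.1) * ENNReal.ofReal (ρ n p.2) := by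
        funext p
        rw [ENNReal.ofReal_mul (hnn m _)]
      rw [e1, lintegral_prod_mul ((hmeas m).ennreal_ofReal.aemeasurable)
        ((hmeas n).ennreal_ofReal.aemeasurable), hgoal_eq m, hgoal_eq n]
    rw [← hval]
    exact hlow2
  -- combine
  set t := ∑ m ∈ S, ENNReal.ofReal (I m) with ht_def
  have htne : t ≠ ⊤ := by
    rw [ht_def]
    exact (ENNReal.sum_lt_top.mpr fun m _ => ENNReal.ofReal_lt_top).ne
  have hq : t * t ≤ ENNReal.ofReal (4 * Z) * t := by
    have hsum1 : (∑ m ∈ S, ∑ n ∈ S, D m n) ≤ ENNReal.ofReal (2 * Z) * t := by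
      calc (∑ m ∈ S, ∑ n ∈ S, D m n) ≤ ∑ m ∈ S, ENNReal.ofReal (2 * Z * I m) :=
            Finset.sum_le_sum fun m _ => hUpper m
        _ = ∑ m ∈ S, ENNReal.ofReal (2 * Z) * ENNReal.ofReal (I m) := by
            apply Finset.sum_congr rfl
            intro m _
            rw [← ENNReal.ofReal_mul (by positivity : (0:ℝ) ≤ 2 * Z)]
        _ = ENNReal.ofReal (2 * Z) * t := by rw [ht_def, Finset.mul_sum]
    calc t * t = ∑ m ∈ S, ∑ n ∈ S, ENNReal.ofReal (I m) * ENNReal.ofReal (I n) := by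
          rw [ht_def, Finset.sum_mul_sum]
      _ ≤ ∑ m ∈ S, ∑ n ∈ S, (D m n + D n m) :=
          Finset.sum_le_sum fun m _ => Finset.sum_le_sum fun n _ => hLow m n
      _ = (∑ m ∈ S, ∑ n ∈ S, D m n) + ∑ m ∈ S, ∑ n ∈ S, D n m := by
          rw [← Finset.sum_add_distrib]
          apply Finset.sum_congr rfl
          intro m _
          rw [← Finset.sum_add_distrib]
      _ = (∑ m ∈ S, ∑ n ∈ S, D m n) + ∑ m ∈ S, ∑ n ∈ S, D m n := by
          rw [Finset.sum_comm (f := fun m n => D n m)]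
      _ ≤ ENNReal.ofReal (2 * Z) * t + ENNReal.ofReal (2 * Z) * t := add_le_add hsum1 hsum1
      _ = ENNReal.ofReal (4 * Z) * t := by
          rw [← add_mul, ← ENNReal.ofReal_add (by positivity) (by positivity),
            show (2 * Z + 2 * Z) = 4 * Z by ring]
  rcases eq_or_ne t 0 with h0 | hne
  · rw [h0]
    exact zero_le
  · exact (ENNReal.mul_le_mul_iff_left hne htne).mp hq

end
end

section
/- Let ρ : ℝ → [0,∞) be integrable with ρ ∈ L¹(ℝ) ∩ L³(ℝ) and suppose ρ satisfies the one-dimensional Thomas–Fermi equation with zero chemical potential: 3κ ρ(z)² = [ Z V_0(z) − ∫ V_{0,0}(z − z') ρ(z') dz' ]_+ for almost every z (the equation satisfied by the unconstrained minimizer of the one-dimensional DSTF functional). Then ∫ ρ ≤ 2Z. -/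
open MeasureTheory Real ENNReal

noncomputable section

/-! ### Auxiliary lemmas for `stmt11` -/

namespace Stmt11Aux

/-- The lowest-Landau-level Gaussian profile. -/
abbrev gg (B : ℝ) (v : ℝ × ℝ) : ℝ := B / (2 * π) * Real.exp (-(B * (v.1 ^ 2 + v.2 ^ 2)) / 2)

lemma gauss2_integrable {B : ℝ} (hB : 0 < B) : Integrable (gg B) := by
  have h1 : Integrable (fun t : ℝ => B / (2 * π) * Real.exp (-(B/2) * t ^ 2)) :=
    (integrable_exp_neg_mul_sq (by linarith)).const_mul _
  have h2 : Integrable (fun t : ℝ => Real.exp (-(B/2) * t ^ 2)) :=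
    integrable_exp_neg_mul_sq (by linarith)
  have h := h1.mul_prod h2
  rw [← Measure.volume_eq_prod] at h
  refine h.congr (Filter.Eventually.of_forall fun v => ?_)
  show B / (2 * π) * rexp (-(B / 2) * v.1 ^ 2) * rexp (-(B / 2) * v.2 ^ 2) = gg B v
  rw [mul_assoc, ← Real.exp_add]
  ring_nf

lemma sqrt_inv_le {a z : ℝ} (hz : z ≠ 0) (ha : 0 ≤ a) :
    (Real.sqrt (a + z ^ 2))⁻¹ ≤ |z|⁻¹ := by
  have h1 : |z| ≤ Real.sqrt (a + z ^ 2) := by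
    rw [← Real.sqrt_sq_eq_abs]
    exact Real.sqrt_le_sqrt (by linarith)
  exact inv_anti₀ (abs_pos.mpr hz) h1

lemma integrable_gauss_bdd {B : ℝ} (hB : 0 < B) {h : ℝ × ℝ → ℝ} (hm : Measurable h)
    {C : ℝ} (hb : ∀ v, ‖h v‖ ≤ C) :
    Integrable (fun v : ℝ × ℝ => gg B v * h v) := by
  have := (gauss2_integrable hB).bdd_mul (hm.aestronglyMeasurable) (Filter.Eventually.of_forall hb)
  exact this.congr (Filter.Eventually.of_forall fun v => by ring)

lemma gauss_shift (b a : ℝ) : ∫ t : ℝ, Real.exp (-(b * (t - a) ^ 2)) = Real.sqrt (π / b) := by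
  have h := integral_sub_right_eq_self (μ := (volume : Measure ℝ))
    (fun t : ℝ => Real.exp (-(b * t ^ 2))) a
  calc ∫ t : ℝ, Real.exp (-(b * (t - a) ^ 2)) = ∫ t : ℝ, Real.exp (-(b * t ^ 2)) := h
    _ = ∫ t : ℝ, Real.exp (-b * t ^ 2) := by simp_rw [neg_mul]
    _ = Real.sqrt (π / b) := integral_gaussian b

lemma autocorr {B : ℝ} (hB : 0 < B) (u : ℝ × ℝ) :
    ∫ x : ℝ × ℝ, gg B x * gg B (x - u) = B / (4 * π) * Real.exp (-(B * (u.1 ^ 2 + u.2 ^ 2)) / 4) := by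
  have hπ : (0:ℝ) < π := Real.pi_pos
  have key : ∀ x : ℝ × ℝ,
      gg B x * gg B (x - u)
      = ((B / (2 * π))^2 * Real.exp (-(B * (u.1 ^ 2 + u.2 ^ 2)) / 4) *
          Real.exp (-(B * (x.1 - u.1/2) ^ 2))) * Real.exp (-(B * (x.2 - u.2/2) ^ 2)) := by
    intro x
    show (B / (2 * π) * Real.exp (-(B * (x.1 ^ 2 + x.2 ^ 2)) / 2)) *
      (B / (2 * π) * Real.exp (-(B * ((x - u).1 ^ 2 + (x - u).2 ^ 2)) / 2)) = _
    simp only [Prod.fst_sub, Prod.snd_sub]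
    rw [show (B / (2 * π) * Real.exp (-(B * (x.1 ^ 2 + x.2 ^ 2)) / 2)) *
      (B / (2 * π) * Real.exp (-(B * ((x.1 - u.1) ^ 2 + (x.2 - u.2) ^ 2)) / 2))
      = (B / (2 * π))^2 * (Real.exp (-(B * (x.1 ^ 2 + x.2 ^ 2)) / 2) *
        Real.exp (-(B * ((x.1 - u.1) ^ 2 + (x.2 - u.2) ^ 2)) / 2)) from by ring]
    rw [show ((B / (2 * π))^2 * Real.exp (-(B * (u.1 ^ 2 + u.2 ^ 2)) / 4) *
          Real.exp (-(B * (x.1 - u.1/2) ^ 2))) * Real.exp (-(B * (x.2 - u.2/2) ^ 2))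
      = (B / (2 * π))^2 * ((Real.exp (-(B * (u.1 ^ 2 + u.2 ^ 2)) / 4) *
          Real.exp (-(B * (x.1 - u.1/2) ^ 2))) * Real.exp (-(B * (x.2 - u.2/2) ^ 2))) from by ring]
    rw [← Real.exp_add, ← Real.exp_add, ← Real.exp_add]
    congr 1
    ring
  simp_rw [key]
  have hsplit : ∫ x : ℝ × ℝ,
      ((B / (2 * π))^2 * Real.exp (-(B * (u.1 ^ 2 + u.2 ^ 2)) / 4) *
          Real.exp (-(B * (x.1 - u.1/2) ^ 2))) * Real.exp (-(B * (x.2 - u.2/2) ^ 2))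
      = (∫ t : ℝ, (B / (2 * π))^2 * Real.exp (-(B * (u.1 ^ 2 + u.2 ^ 2)) / 4) *
          Real.exp (-(B * (t - u.1/2) ^ 2))) * ∫ t : ℝ, Real.exp (-(B * (t - u.2/2) ^ 2)) := by
    rw [Measure.volume_eq_prod]
    exact integral_prod_mul (L := ℝ)
      (fun t => (B / (2 * π))^2 * Real.exp (-(B * (u.1 ^ 2 + u.2 ^ 2)) / 4) *
          Real.exp (-(B * (t - u.1/2) ^ 2)))
      (fun t => Real.exp (-(B * (t - u.2/2) ^ 2)))
  rw [hsplit, integral_const_mul, gauss_shift, gauss_shift]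
  rw [show (B / (2 * π))^2 * Real.exp (-(B * (u.1 ^ 2 + u.2 ^ 2)) / 4) * Real.sqrt (π / B) * Real.sqrt (π / B)
      = (B / (2 * π))^2 * (Real.sqrt (π / B) * Real.sqrt (π / B)) * Real.exp (-(B * (u.1 ^ 2 + u.2 ^ 2)) / 4) from by ring]
  rw [Real.mul_self_sqrt (by positivity)]
  congr 1
  field_simp
  ring

lemma measurePreserving_T :
    MeasurePreserving (fun p : (ℝ × ℝ) × (ℝ × ℝ) => (p.1, p.1 - p.2))
      (volume : Measure ((ℝ × ℝ) × (ℝ × ℝ))) volume := by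
  have h1 : MeasurePreserving (fun p : (ℝ × ℝ) × (ℝ × ℝ) => (p.1, p.2 - p.1))
      (volume : Measure ((ℝ × ℝ) × (ℝ × ℝ))) volume := by
    rw [Measure.volume_eq_prod]
    exact measurePreserving_prod_sub volume volume
  have h2 : MeasurePreserving (Prod.map (id : ℝ × ℝ → ℝ × ℝ) (Neg.neg : ℝ × ℝ → ℝ × ℝ))
      (volume : Measure ((ℝ × ℝ) × (ℝ × ℝ))) volume := by
    rw [Measure.volume_eq_prod]
    exact (MeasurePreserving.id volume).prod (Measure.measurePreserving_neg volume)
  have heq : (fun p : (ℝ × ℝ) × (ℝ × ℝ) => (p.1, p.1 - p.2)) =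
      (Prod.map (id : ℝ × ℝ → ℝ × ℝ) (Neg.neg : ℝ × ℝ → ℝ × ℝ)) ∘
        (fun p : (ℝ × ℝ) × (ℝ × ℝ) => (p.1, p.2 - p.1)) := by
    funext p; simp [Prod.map, neg_sub]
  rw [heq]
  exact h2.comp h1

lemma swap_core {B : ℝ} (hB : 0 < B) {w : ℝ} (hw : w ≠ 0) :
    (∫ x : ℝ × ℝ, ∫ y : ℝ × ℝ, gg B x * gg B y / Real.sqrt ((x.1 - y.1) ^ 2 + (x.2 - y.2) ^ 2 + w ^ 2))
      = ∫ u : ℝ × ℝ, B / (4 * π) * Real.exp (-(B * (u.1 ^ 2 + u.2 ^ 2)) / 4) / Real.sqrt (u.1 ^ 2 + u.2 ^ 2 + w ^ 2) := by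
  have step1 : ∀ x : ℝ × ℝ,
      (∫ y : ℝ × ℝ, gg B x * gg B y / Real.sqrt ((x.1 - y.1) ^ 2 + (x.2 - y.2) ^ 2 + w ^ 2))
      = ∫ u : ℝ × ℝ, gg B x * gg B (x - u) / Real.sqrt (u.1 ^ 2 + u.2 ^ 2 + w ^ 2) := by
    intro x
    have := integral_sub_left_eq_self
      (fun y : ℝ × ℝ => gg B x * gg B y / Real.sqrt ((x.1 - y.1) ^ 2 + (x.2 - y.2) ^ 2 + w ^ 2))
      (volume : Measure (ℝ × ℝ)) x
    rw [← this]
    congr 1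
    funext u
    simp only [Prod.fst_sub, Prod.snd_sub, _root_.sub_sub_cancel]
  simp_rw [step1]
  have hG : Integrable (fun p : (ℝ × ℝ) × (ℝ × ℝ) =>
      (Real.sqrt ((p.1.1 - p.2.1) ^ 2 + (p.1.2 - p.2.2) ^ 2 + w ^ 2))⁻¹ * (gg B p.1 * gg B p.2)) := by
    have hgg : Integrable (fun p : (ℝ × ℝ) × (ℝ × ℝ) => gg B p.1 * gg B p.2) := by
      rw [Measure.volume_eq_prod]
      exact (gauss2_integrable hB).mul_prod (gauss2_integrable hB)
    refine hgg.bdd_mul (c := |w|⁻¹) ?_ (Filter.Eventually.of_forall fun p => ?_)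
    · apply Measurable.aestronglyMeasurable; fun_prop
    · rw [Real.norm_eq_abs, abs_of_nonneg (by positivity)]
      exact sqrt_inv_le hw (by positivity)
  have hF : Integrable (fun p : (ℝ × ℝ) × (ℝ × ℝ) =>
      gg B p.1 * gg B (p.1 - p.2) / Real.sqrt (p.2.1 ^ 2 + p.2.2 ^ 2 + w ^ 2)) := by
    have := (measurePreserving_T.integrable_comp hG.aestronglyMeasurable).mpr hG
    refine this.congr (Filter.Eventually.of_forall fun p => ?_)
    simp only [Function.comp_apply, Prod.fst_sub, Prod.snd_sub, _root_.sub_sub_cancel]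
    rw [div_eq_inv_mul]
  have hswap := integral_integral_swap
    (f := fun (x u : ℝ × ℝ) => gg B x * gg B (x - u) / Real.sqrt (u.1 ^ 2 + u.2 ^ 2 + w ^ 2))
    (by rw [← Measure.volume_eq_prod]; exact hF)
  rw [hswap]
  congr 1
  funext u
  rw [integral_div, autocorr hB u]

lemma scale_step {B w : ℝ} :
    (∫ u : ℝ × ℝ, B / (4 * π) * Real.exp (-(B * (u.1 ^ 2 + u.2 ^ 2)) / 4) / Real.sqrt (u.1 ^ 2 + u.2 ^ 2 + w ^ 2))
    = 2 * ∫ v : ℝ × ℝ, B / (4 * π) * Real.exp (-(B * (v.1 ^ 2 + v.2 ^ 2)) / 2) /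
        Real.sqrt (2 * (v.1 ^ 2 + v.2 ^ 2) + w ^ 2) := by
  have h := Measure.integral_comp_smul (μ := (volume : Measure (ℝ × ℝ)))
    (fun u : ℝ × ℝ => B / (4 * π) * Real.exp (-(B * (u.1 ^ 2 + u.2 ^ 2)) / 4) /
      Real.sqrt (u.1 ^ 2 + u.2 ^ 2 + w ^ 2)) (Real.sqrt 2)
  have hrank : Module.finrank ℝ (ℝ × ℝ) = 2 := by simp
  rw [hrank, Real.sq_sqrt (by norm_num : (0:ℝ) ≤ 2)] at h
  have habs : |(2:ℝ)⁻¹| = 2⁻¹ := by norm_num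
  rw [habs, smul_eq_mul] at h
  have key : (fun v : ℝ × ℝ => (fun u : ℝ × ℝ => B / (4 * π) * Real.exp (-(B * (u.1 ^ 2 + u.2 ^ 2)) / 4) /
      Real.sqrt (u.1 ^ 2 + u.2 ^ 2 + w ^ 2)) (Real.sqrt 2 • v))
      = fun v : ℝ × ℝ => B / (4 * π) * Real.exp (-(B * (v.1 ^ 2 + v.2 ^ 2)) / 2) /
        Real.sqrt (2 * (v.1 ^ 2 + v.2 ^ 2) + w ^ 2) := by
    funext v
    have h1 : (Real.sqrt 2 • v).1 = Real.sqrt 2 * v.1 := rfl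
    have h2 : (Real.sqrt 2 • v).2 = Real.sqrt 2 * v.2 := rfl
    simp only [h1, h2, mul_pow, Real.sq_sqrt (by norm_num : (0:ℝ) ≤ 2)]
    rw [show -(B * (2 * v.1 ^ 2 + 2 * v.2 ^ 2)) / 4 = -(B * (v.1 ^ 2 + v.2 ^ 2)) / 2 by ring,
      show 2 * v.1 ^ 2 + 2 * v.2 ^ 2 + w ^ 2 = 2 * (v.1 ^ 2 + v.2 ^ 2) + w ^ 2 by ring]
  rw [key] at h
  rw [h]
  ring

lemma Vm0_eq (B z : ℝ) :
    Vm B 0 z = ∫ v : ℝ × ℝ, gg B v / Real.sqrt (v.1 ^ 2 + v.2 ^ 2 + z ^ 2) := by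
  unfold Vm normx phiSq
  norm_num

lemma Vmn00_eq (B w : ℝ) :
    Vmn B 0 0 w = ∫ x : ℝ × ℝ, ∫ y : ℝ × ℝ,
      gg B x * gg B y / Real.sqrt ((x.1 - y.1) ^ 2 + (x.2 - y.2) ^ 2 + w ^ 2) := by
  unfold Vmn normx phiSq
  norm_num

lemma Vm0_pos {B : ℝ} (hB : 0 < B) {z : ℝ} (hz : z ≠ 0) : 0 < Vm B 0 z := by
  have hπ : (0:ℝ) < π := Real.pi_pos
  rw [Vm0_eq]
  have hint : Integrable (fun v : ℝ × ℝ => gg B v / Real.sqrt (v.1 ^ 2 + v.2 ^ 2 + z ^ 2)) := by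
    have := integrable_gauss_bdd hB
      (h := fun v : ℝ × ℝ => (Real.sqrt (v.1 ^ 2 + v.2 ^ 2 + z ^ 2))⁻¹)
      (by fun_prop) (C := |z|⁻¹) (fun v => by
        rw [Real.norm_eq_abs, abs_of_nonneg (by positivity)]
        exact sqrt_inv_le hz (by positivity))
    exact this.congr (Filter.Eventually.of_forall fun v => (div_eq_mul_inv _ _).symm)
  refine (integral_pos_iff_support_of_nonneg (fun v => by positivity) hint).mpr ?_
  have hsupp : Function.support (fun v : ℝ × ℝ => gg B v / Real.sqrt (v.1 ^ 2 + v.2 ^ 2 + z ^ 2))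
      = Set.univ := by
    ext v
    have h1 : (0:ℝ) < gg B v := by positivity
    have h2 : (0:ℝ) < Real.sqrt (v.1 ^ 2 + v.2 ^ 2 + z ^ 2) := by positivity
    simp only [Function.mem_support, Set.mem_univ, iff_true]
    exact ne_of_gt (div_pos h1 h2)
  rw [hsupp]
  simp

lemma Vmn00_nonneg {B : ℝ} (hB : 0 < B) (w : ℝ) : 0 ≤ Vmn B 0 0 w := by
  rw [Vmn00_eq]
  apply integral_nonneg
  intro x
  apply integral_nonneg
  intro y
  have hπ : (0:ℝ) < π := Real.pi_pos
  positivity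

lemma kernel_bound {B z w : ℝ} (hB : 0 < B) (hz : z ≠ 0) (hw : w ≠ 0)
    (hle : w ^ 2 ≤ 4 * z ^ 2) : 1 / 2 * Vm B 0 z ≤ Vmn B 0 0 w := by
  have hπ : (0:ℝ) < π := Real.pi_pos
  rw [Vm0_eq, Vmn00_eq, swap_core hB hw, scale_step, ← integral_const_mul, ← integral_const_mul]
  have hint1 : Integrable (fun v : ℝ × ℝ =>
      1 / 2 * (gg B v / Real.sqrt (v.1 ^ 2 + v.2 ^ 2 + z ^ 2))) := by
    have := integrable_gauss_bdd hB
      (h := fun v : ℝ × ℝ => (Real.sqrt (v.1 ^ 2 + v.2 ^ 2 + z ^ 2))⁻¹)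
      (by fun_prop) (C := |z|⁻¹) (fun v => by
        rw [Real.norm_eq_abs, abs_of_nonneg (by positivity)]
        exact sqrt_inv_le hz (by positivity))
    exact (this.const_mul (1/2 : ℝ)).congr (Filter.Eventually.of_forall fun v => by
      simp [div_eq_mul_inv])
  have hint2 : Integrable (fun v : ℝ × ℝ =>
      2 * (B / (4 * π) * Real.exp (-(B * (v.1 ^ 2 + v.2 ^ 2)) / 2) /
        Real.sqrt (2 * (v.1 ^ 2 + v.2 ^ 2) + w ^ 2))) := by
    have := integrable_gauss_bdd hB
      (h := fun v : ℝ × ℝ => (Real.sqrt (2 * (v.1 ^ 2 + v.2 ^ 2) + w ^ 2))⁻¹)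
      (by fun_prop) (C := |w|⁻¹) (fun v => by
        rw [Real.norm_eq_abs, abs_of_nonneg (by positivity)]
        exact sqrt_inv_le hw (by positivity))
    refine this.congr (Filter.Eventually.of_forall fun v => ?_)
    rw [div_eq_mul_inv]
    show gg B v * _ = _
    field_simp
    ring
  refine integral_mono hint1 hint2 fun v => ?_
  have ha : (0:ℝ) ≤ v.1 ^ 2 + v.2 ^ 2 := by positivity
  have hs2pos : (0:ℝ) < Real.sqrt (2 * (v.1 ^ 2 + v.2 ^ 2) + w ^ 2) := by positivity
  have hs1pos : (0:ℝ) < Real.sqrt (v.1 ^ 2 + v.2 ^ 2 + z ^ 2) := by positivity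
  have hsqrt : Real.sqrt (2 * (v.1 ^ 2 + v.2 ^ 2) + w ^ 2)
      ≤ 2 * Real.sqrt (v.1 ^ 2 + v.2 ^ 2 + z ^ 2) := by
    rw [show 2 * Real.sqrt (v.1 ^ 2 + v.2 ^ 2 + z ^ 2)
        = Real.sqrt (4 * (v.1 ^ 2 + v.2 ^ 2 + z ^ 2)) by
      rw [show (4:ℝ) * (v.1 ^ 2 + v.2 ^ 2 + z ^ 2) = 2 ^ 2 * (v.1 ^ 2 + v.2 ^ 2 + z ^ 2) by ring,
        Real.sqrt_mul (by norm_num), Real.sqrt_sq (by norm_num)]]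
    exact Real.sqrt_le_sqrt (by nlinarith)
  have hkey : (Real.sqrt (v.1 ^ 2 + v.2 ^ 2 + z ^ 2))⁻¹
      ≤ 2 * (Real.sqrt (2 * (v.1 ^ 2 + v.2 ^ 2) + w ^ 2))⁻¹ := by
    have h1 : (2 * Real.sqrt (v.1 ^ 2 + v.2 ^ 2 + z ^ 2))⁻¹
        ≤ (Real.sqrt (2 * (v.1 ^ 2 + v.2 ^ 2) + w ^ 2))⁻¹ := inv_anti₀ hs2pos hsqrt
    calc (Real.sqrt (v.1 ^ 2 + v.2 ^ 2 + z ^ 2))⁻¹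
        = 2 * (2 * Real.sqrt (v.1 ^ 2 + v.2 ^ 2 + z ^ 2))⁻¹ := by
          rw [mul_inv]; ring
      _ ≤ 2 * (Real.sqrt (2 * (v.1 ^ 2 + v.2 ^ 2) + w ^ 2))⁻¹ := by linarith
  have hC : (0:ℝ) ≤ B / (4 * π) * Real.exp (-(B * (v.1 ^ 2 + v.2 ^ 2)) / 2) := by positivity
  calc 1 / 2 * (gg B v / Real.sqrt (v.1 ^ 2 + v.2 ^ 2 + z ^ 2))
      = (B / (4 * π) * Real.exp (-(B * (v.1 ^ 2 + v.2 ^ 2)) / 2)) *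
          (Real.sqrt (v.1 ^ 2 + v.2 ^ 2 + z ^ 2))⁻¹ := by
        rw [div_eq_mul_inv]
        show 1 / 2 * (gg B v * _) = _
        field_simp
        ring
    _ ≤ (B / (4 * π) * Real.exp (-(B * (v.1 ^ 2 + v.2 ^ 2)) / 2)) *
          (2 * (Real.sqrt (2 * (v.1 ^ 2 + v.2 ^ 2) + w ^ 2))⁻¹) :=
        mul_le_mul_of_nonneg_left hkey hC
    _ = 2 * (B / (4 * π) * Real.exp (-(B * (v.1 ^ 2 + v.2 ^ 2)) / 2) /
          Real.sqrt (2 * (v.1 ^ 2 + v.2 ^ 2) + w ^ 2)) := by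
        rw [div_eq_mul_inv]; ring

end Stmt11Aux

/-- a solution of the one-dimensional Thomas–Fermi equation with zero
chemical potential has total mass at most `2Z`. -/
theorem stmt11 (Z B : ℝ) (hZ : 0 < Z) (hB : 0 < B)
    (ρ : ℝ → ℝ) (hmeas : Measurable ρ) (hnn : ∀ z, 0 ≤ ρ z)
    (hL1 : Integrable ρ) (hL3 : Integrable (fun z => ρ z ^ 3))
    (hconv : ∀ᵐ z : ℝ ∂volume, Integrable (fun z' => Vmn B 0 0 (z - z') * ρ z'))
    (hTF : ∀ᵐ z : ℝ ∂volume,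
      3 * kappa * ρ z ^ 2 =
        max (Z * Vm B 0 z - ∫ z' : ℝ, Vmn B 0 0 (z - z') * ρ z') 0) :
    (∫ z : ℝ, ρ z) ≤ 2 * Z := by
  classical
  by_contra hNlt
  push_neg at hNlt
  open Stmt11Aux in
  have hπ : (0:ℝ) < π := Real.pi_pos
  have hSmeas : ∀ R : ℝ, MeasurableSet {y : ℝ | |y| < R} := fun R =>
    measurableSet_lt (measurable_id.abs) measurable_const
  -- monotonicity of the truncated mass
  have hmono : ∀ R R' : ℝ, R ≤ R' →
      (∫ z in {y : ℝ | |y| < R}, ρ z) ≤ ∫ z in {y : ℝ | |y| < R'}, ρ z := by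
    intro R R' hRR'
    refine setIntegral_mono_set hL1.integrableOn
      (Filter.Eventually.of_forall fun z => hnn z) ?_
    exact HasSubset.Subset.eventuallyLE fun y (hy : |y| < R) => lt_of_lt_of_le hy hRR'
  -- Key step 1: if the mass inside radius R exceeds 2Z then ρ vanishes beyond R
  have key1 : ∀ R : ℝ, 0 < R → 2 * Z < (∫ z in {y : ℝ | |y| < R}, ρ z) →
      ∀ᵐ z : ℝ ∂volume, R < |z| → ρ z = 0 := by
    intro R hR hmR
    filter_upwards [hconv, hTF] with z hcz htz hzR
    by_contra hρz
    have hρpos : 0 < ρ z := lt_of_le_of_ne (hnn z) (Ne.symm hρz)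
    have hzne : z ≠ 0 := by
      intro h
      rw [h, abs_zero] at hzR
      linarith
    have hV0 : 0 < Vm B 0 z := Vm0_pos hB hzne
    have hIlt : (∫ z' : ℝ, Vmn B 0 0 (z - z') * ρ z') < Z * Vm B 0 z := by
      have h3 : 0 < 3 * kappa * ρ z ^ 2 := by
        have : (0:ℝ) < kappa := by
          have : kappa = π ^ 2 / 3 := rfl
          rw [this]; positivity
        positivity
      rw [htz] at h3
      have hmaxpos : 0 < Z * Vm B 0 z - ∫ z' : ℝ, Vmn B 0 0 (z - z') * ρ z' := by
        by_contra hle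
        push_neg at hle
        rw [max_eq_right hle] at h3
        exact lt_irrefl 0 h3
      linarith
    have hIge : 1 / 2 * Vm B 0 z * (∫ z' in {y : ℝ | |y| < R}, ρ z')
        ≤ ∫ z' : ℝ, Vmn B 0 0 (z - z') * ρ z' := by
      have hbound : ∀ z' : ℝ,
          Set.indicator {y : ℝ | |y| < R} (fun y => 1 / 2 * Vm B 0 z * ρ y) z'
            ≤ Vmn B 0 0 (z - z') * ρ z' := by
        intro z'
        by_cases hz' : z' ∈ {y : ℝ | |y| < R}
        · rw [Set.indicator_of_mem hz']
          have hz'R : |z'| < R := hz'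
          have hne : z - z' ≠ 0 := by
            have : |z'| < |z| := lt_trans hz'R hzR
            intro h
            have : z = z' := by linarith [sub_eq_zero.mp h]
            rw [this] at hzR
            linarith
          have hsq : (z - z') ^ 2 ≤ 4 * z ^ 2 := by
            have h1 : |z - z'| ≤ |z| + |z'| := abs_sub _ _
            nlinarith [sq_abs (z - z'), sq_abs z, sq_abs z', abs_nonneg (z - z'),
              abs_nonneg z, abs_nonneg z']
          exact mul_le_mul_of_nonneg_right (kernel_bound hB hzne hne hsq) (hnn z')
        · rw [Set.indicator_of_notMem hz']
          exact mul_nonneg (Vmn00_nonneg hB _) (hnn z')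
      have hint1 : Integrable
          (Set.indicator {y : ℝ | |y| < R} (fun y => 1 / 2 * Vm B 0 z * ρ y)) := by
        have : Integrable (fun y => 1 / 2 * Vm B 0 z * ρ y) := by
          simpa [mul_assoc] using (hL1.const_mul (1 / 2 * Vm B 0 z))
        exact this.indicator (hSmeas R)
      have h := integral_mono hint1 hcz hbound
      rwa [integral_indicator (hSmeas R), integral_const_mul] at h
    nlinarith [mul_pos hV0 (show (0:ℝ) < (∫ z' in {y : ℝ | |y| < R}, ρ z') - 2 * Z by linarith)]
  -- the truncated masses tend to the full mass
  have htend : Filter.Tendsto (fun n : ℕ => ∫ z in {y : ℝ | |y| < (n:ℝ)}, ρ z)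
      Filter.atTop (nhds (∫ z : ℝ, ρ z)) := by
    have hU : (⋃ n : ℕ, {y : ℝ | |y| < (n:ℝ)}) = Set.univ := by
      ext y
      simp only [Set.mem_iUnion, Set.mem_setOf_eq, Set.mem_univ, iff_true]
      obtain ⟨n, hn⟩ := exists_nat_gt |y|
      exact ⟨n, hn⟩
    have h := tendsto_setIntegral_of_monotone (s := fun n : ℕ => {y : ℝ | |y| < (n:ℝ)})
      (fun n => hSmeas _)
      (fun n n' hnn' y (hy : |y| < (n:ℝ)) => lt_of_lt_of_le hy (by exact_mod_cast hnn'))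
      (by rw [hU]; exact hL1.integrableOn)
    rwa [hU, Measure.restrict_univ] at h
  -- the set T and its infimum
  set T : Set ℝ := {R : ℝ | 0 < R ∧ 2 * Z < ∫ z in {y : ℝ | |y| < R}, ρ z} with hT
  have hTne : T.Nonempty := by
    have h1 : ∀ᶠ n : ℕ in Filter.atTop, 2 * Z < ∫ z in {y : ℝ | |y| < (n:ℝ)}, ρ z :=
      (tendsto_order.1 htend).1 (2 * Z) hNlt
    obtain ⟨n, hn1, hn2⟩ := (h1.and (Filter.eventually_ge_atTop 1)).exists
    exact ⟨(n:ℝ), by exact_mod_cast hn2, hn1⟩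
  have hTbdd : BddBelow T := ⟨0, fun R hR => hR.1.le⟩
  set R₀ : ℝ := sInf T with hR₀
  have hR₀nonneg : 0 ≤ R₀ := le_csInf hTne fun R hR => hR.1.le
  have hmem : ∀ r : ℝ, R₀ < r → 0 < r ∧ 2 * Z < ∫ z in {y : ℝ | |y| < r}, ρ z := by
    intro r hr
    obtain ⟨t, htT, htr⟩ := exists_lt_of_csInf_lt hTne hr
    exact ⟨lt_trans htT.1 htr, lt_of_lt_of_le htT.2 (hmono t r htr.le)⟩
  have hlow : ∀ r : ℝ, r < R₀ → (∫ z in {y : ℝ | |y| < r}, ρ z) ≤ 2 * Z := by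
    intro r hr
    by_contra h
    push_neg at h
    rcases le_or_gt r 0 with h0 | h0
    · have hempty : {y : ℝ | |y| < r} = ∅ := by
        ext y
        simp only [Set.mem_setOf_eq, Set.mem_empty_iff_false, iff_false, not_lt]
        exact le_trans h0 (abs_nonneg y)
      rw [hempty] at h
      simp at h
      linarith
    · exact absurd (csInf_le hTbdd ⟨h0, h⟩) (not_le.mpr hr)
  -- ρ vanishes a.e. beyond R₀
  have hvan : ∀ᵐ z : ℝ ∂volume, R₀ < |z| → ρ z = 0 := by
    have hn : ∀ n : ℕ, ∀ᵐ z : ℝ ∂volume, R₀ + 1 / (n + 1) < |z| → ρ z = 0 := by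
      intro n
      have hpos : (0:ℝ) < 1 / ((n:ℝ) + 1) := by positivity
      obtain ⟨h1, h2⟩ := hmem (R₀ + 1 / (n + 1)) (by linarith)
      exact key1 _ h1 h2
    rw [← MeasureTheory.ae_all_iff] at hn
    filter_upwards [hn] with z hz hzR
    obtain ⟨n, hn'⟩ := exists_nat_one_div_lt (show (0:ℝ) < |z| - R₀ by linarith)
    exact hz n (by linarith)
  -- hence the full mass is the mass inside radius R₀
  have hedge : ∀ᵐ z : ℝ ∂volume, ¬ |z| = R₀ := by
    rw [MeasureTheory.ae_iff]
    simp only [not_not]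
    refine measure_mono_null (fun z hz => ?_) (Set.Finite.measure_zero
      ((Set.finite_singleton (-R₀)).insert R₀) volume)
    have hz' : |z| = R₀ := hz
    rcases abs_eq hR₀nonneg |>.mp hz' with h | h
    · exact Set.mem_insert_iff.mpr (Or.inl h)
    · exact Set.mem_insert_iff.mpr (Or.inr (Set.mem_singleton_iff.mpr h))
  have hNm : (∫ z : ℝ, ρ z) = ∫ z in {y : ℝ | |y| < R₀}, ρ z := by
    have hcompl : (∫ z in {y : ℝ | |y| < R₀}ᶜ, ρ z) = 0 := by
      have hae : ∀ᵐ z : ℝ ∂volume, z ∈ {y : ℝ | |y| < R₀}ᶜ → ρ z = 0 := by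
        filter_upwards [hvan, hedge] with z h1 h2 hmem'
        have hge : R₀ ≤ |z| := not_lt.mp hmem'
        rcases lt_or_eq_of_le hge with h | h
        · exact h1 h
        · exact absurd h.symm h2
      calc (∫ z in {y : ℝ | |y| < R₀}ᶜ, ρ z) = ∫ z in {y : ℝ | |y| < R₀}ᶜ, (0:ℝ) :=
            setIntegral_congr_ae (hSmeas R₀).compl hae
        _ = 0 := integral_zero _ _
    have h := integral_add_compl (hSmeas R₀) hL1
    rw [hcompl, add_zero] at h
    exact h.symm
  -- and that mass is at most 2Z
  have hfin : (∫ z in {y : ℝ | |y| < R₀}, ρ z) ≤ 2 * Z := by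
    have hU : (⋃ n : ℕ, {y : ℝ | |y| < R₀ - 1 / (n + 1)}) = {y : ℝ | |y| < R₀} := by
      ext y
      simp only [Set.mem_iUnion, Set.mem_setOf_eq]
      constructor
      · rintro ⟨n, hn⟩
        have : (0:ℝ) < 1 / ((n:ℝ) + 1) := by positivity
        linarith
      · intro hy
        obtain ⟨n, hn⟩ := exists_nat_one_div_lt (show (0:ℝ) < R₀ - |y| by linarith)
        exact ⟨n, by linarith⟩
    have hmono' : Monotone (fun n : ℕ => {y : ℝ | |y| < R₀ - 1 / (n + 1)}) := by
      intro n n' hnn' y (hy : |y| < R₀ - 1 / (n + 1))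
      have h1 : 1 / ((n':ℝ) + 1) ≤ 1 / ((n:ℝ) + 1) := by
        apply one_div_le_one_div_of_le
        · positivity
        · exact_mod_cast Nat.add_le_add_right hnn' 1
      show |y| < R₀ - 1 / (n' + 1)
      linarith
    have h := tendsto_setIntegral_of_monotone
      (s := fun n : ℕ => {y : ℝ | |y| < R₀ - 1 / (n + 1)})
      (fun n => hSmeas _) hmono' (by rw [hU]; exact hL1.integrableOn)
    rw [hU] at h
    refine le_of_tendsto h (Filter.Eventually.of_forall fun n => hlow _ ?_)
    have : (0:ℝ) < 1 / ((n:ℝ) + 1) := by positivity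
    linarith
  rw [hNm] at hNlt
  linarith

end
end

section
/- For all Z > 0 and B > 0: E^{1D}_w(Z,B) = Z^{3/2} B^{1/4} E^{1D}_w(1,1). -/
open MeasureTheory Real ENNReal

noncomputable section

open Pointwise

lemma Vm_scale {B : ℝ} (hB : 0 < B) (z : ℝ) :
    Vm B 0 z = Real.sqrt B * Vm 1 0 (Real.sqrt B * z) := by
  set u := Real.sqrt B with hu_def
  have hu : 0 < u := Real.sqrt_pos.2 hB
  have hu2 : u ^ 2 = B := Real.sq_sqrt hB.le
  set F : ℝ × ℝ → ℝ := fun xp => phiSq B 0 xp / normx xp z with hF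
  have key : ∀ yp : ℝ × ℝ, F (u⁻¹ • yp) = u ^ 3 * (phiSq 1 0 yp / normx yp (u * z)) := by
    intro yp
    have h1 : (u⁻¹ • yp).1 = u⁻¹ * yp.1 := rfl
    have h2 : (u⁻¹ • yp).2 = u⁻¹ * yp.2 := rfl
    have hsq : B * ((u⁻¹ * yp.1) ^ 2 + (u⁻¹ * yp.2) ^ 2) = yp.1 ^ 2 + yp.2 ^ 2 := by
      field_simp
      nlinarith [hu2]
    have hphi : phiSq B 0 (u⁻¹ • yp) = u ^ 2 * phiSq 1 0 yp := by
      simp only [phiSq, h1, h2, hsq, pow_zero, Nat.factorial_zero, hu2]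
      ring
    have hnorm : normx (u⁻¹ • yp) z = u⁻¹ * normx yp (u * z) := by
      simp only [normx, h1, h2]
      rw [show (u⁻¹ * yp.1) ^ 2 + (u⁻¹ * yp.2) ^ 2 + z ^ 2
          = (u⁻¹) ^ 2 * (yp.1 ^ 2 + yp.2 ^ 2 + (u * z) ^ 2) by field_simp,
        Real.sqrt_mul (by positivity), Real.sqrt_sq (by positivity)]
    rw [hF]
    simp only [hphi, hnorm]
    rcases eq_or_ne (normx yp (u * z)) 0 with h | h
    · simp [h]
    · field_simp
  have hint : ∫ yp : ℝ × ℝ, F (u⁻¹ • yp) = |(u⁻¹ ^ (Module.finrank ℝ (ℝ × ℝ)))⁻¹| • ∫ xp, F xp :=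
    MeasureTheory.Measure.integral_comp_smul volume F u⁻¹
  have hfr : Module.finrank ℝ (ℝ × ℝ) = 2 := by
    simp [Module.finrank_prod]
  rw [hfr] at hint
  have habs : |((u:ℝ)⁻¹ ^ 2)⁻¹| = u ^ 2 := by
    rw [abs_of_nonneg (by positivity)]
    field_simp
  rw [habs] at hint
  have hleft : ∫ yp : ℝ × ℝ, F (u⁻¹ • yp) = u ^ 3 * Vm 1 0 (u * z) := by
    simp only [key]
    rw [integral_const_mul]
    rfl
  have hfin : u ^ 3 * Vm 1 0 (u * z) = u ^ 2 * Vm B 0 z := by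
    rw [← hleft, hint, smul_eq_mul]; rfl
  nlinarith [hfin, sq_nonneg u, hu]

section scaling

variable {Z B : ℝ} (hZ : 0 < Z) (hB : 0 < B)

-- abbreviations
lemma energy_scale (hZ : 0 < Z) (hB : 0 < B) (σ : ℝ → ℝ) :
    E1Dw B Z (fun z => (Real.sqrt Z * B ^ ((1:ℝ)/4)) * σ (Real.sqrt B * z))
      = Z ^ ((3:ℝ)/2) * B ^ ((1:ℝ)/4) * E1Dw 1 1 σ := by
  set u := Real.sqrt B with hu_def
  set a := Real.sqrt Z * B ^ ((1:ℝ)/4) with ha_def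
  set C := Z ^ ((3:ℝ)/2) * B ^ ((1:ℝ)/4) with hC_def
  have hu : 0 < u := Real.sqrt_pos.2 hB
  have ha : 0 < a := by positivity
  have hZr : Real.sqrt Z = Z ^ ((1:ℝ)/2) := Real.sqrt_eq_rpow Z
  have hBr : u = B ^ ((1:ℝ)/2) := Real.sqrt_eq_rpow B
  have hZa : Z * a = C := by
    rw [ha_def, hZr, hC_def, ← mul_assoc]
    congr 1
    nth_rewrite 1 [← Real.rpow_one Z]
    rw [← Real.rpow_add hZ]
    norm_num
  have ha3 : a ^ 3 = C * u := by
    rw [ha_def, hZr, mul_pow,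
      ← Real.rpow_natCast (Z ^ ((1:ℝ)/2)) 3, ← Real.rpow_mul hZ.le,
      ← Real.rpow_natCast (B ^ ((1:ℝ)/4)) 3, ← Real.rpow_mul hB.le,
      hC_def, hBr]
    rw [mul_assoc, ← Real.rpow_add hB]
    norm_num
  have hcube : (∫ z : ℝ, ((fun z => a * σ (u * z)) z) ^ 3)
      = a ^ 3 * u⁻¹ * ∫ w : ℝ, σ w ^ 3 := by
    simp only [mul_pow]
    rw [integral_const_mul, MeasureTheory.Measure.integral_comp_mul_left (fun w => σ w ^ 3) u,
      smul_eq_mul, abs_of_nonneg (by positivity : (0:ℝ) ≤ u⁻¹)]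
    ring
  have hpot : (∫ z : ℝ, Vm B 0 z * ((fun z => a * σ (u * z)) z))
      = a * ∫ w : ℝ, Vm 1 0 w * σ w := by
    have : (fun z : ℝ => Vm B 0 z * (a * σ (u * z)))
        = fun z => (a * u) * ((fun w => Vm 1 0 w * σ w) (u * z)) := by
      funext z
      rw [Vm_scale hB]
      ring
    rw [this, integral_const_mul, MeasureTheory.Measure.integral_comp_mul_left (fun w => Vm 1 0 w * σ w) u,
      smul_eq_mul, abs_of_nonneg (by positivity : (0:ℝ) ≤ u⁻¹)]
    field_simp
  rw [E1Dw, E1Dw, hcube, hpot]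
  have h1 : kappa * (a ^ 3 * u⁻¹ * ∫ w : ℝ, σ w ^ 3) = C * (kappa * ∫ w : ℝ, σ w ^ 3) := by
    rw [ha3]
    field_simp
  have h2 : Z * (a * ∫ w : ℝ, Vm 1 0 w * σ w) = C * (1 * ∫ w : ℝ, Vm 1 0 w * σ w) := by
    rw [← mul_assoc, hZa]
    ring
  rw [h1, h2]
  ring

lemma adm_forward (hZ : 0 < Z) (hB : 0 < B) {σ : ℝ → ℝ} (hσ : Adm1w 1 σ) :
    Adm1w B (fun z => (Real.sqrt Z * B ^ ((1:ℝ)/4)) * σ (Real.sqrt B * z)) := by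
  set u := Real.sqrt B with hu_def
  set a := Real.sqrt Z * B ^ ((1:ℝ)/4) with ha_def
  have hu : 0 < u := Real.sqrt_pos.2 hB
  have ha : 0 < a := by positivity
  refine ⟨?_, ?_, ?_, ?_⟩
  · exact (hσ.meas.comp (measurable_id.const_mul u)).const_mul a
  · intro z; exact mul_nonneg ha.le (hσ.nonneg _)
  · simpa [mul_pow] using
      (((integrable_comp_mul_left_iff (fun w => σ w ^ 3) hu.ne').2 hσ.cube_int).const_mul (a ^ 3))
  · have : (fun z : ℝ => Vm B 0 z * (a * σ (u * z)))
        = fun z => (a * u) * ((fun w => Vm 1 0 w * σ w) (u * z)) := by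
      funext z
      rw [Vm_scale hB]
      ring
    rw [this]
    exact ((integrable_comp_mul_left_iff (fun w => Vm 1 0 w * σ w) hu.ne').2 hσ.pot_int).const_mul _

lemma adm_backward (hZ : 0 < Z) (hB : 0 < B) {ρ : ℝ → ℝ} (hρ : Adm1w B ρ) :
    Adm1w 1 (fun w => (Real.sqrt Z * B ^ ((1:ℝ)/4))⁻¹ * ρ ((Real.sqrt B)⁻¹ * w)) := by
  set u := Real.sqrt B with hu_def
  set a := Real.sqrt Z * B ^ ((1:ℝ)/4) with ha_def
  have hu : 0 < u := Real.sqrt_pos.2 hB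
  have ha : 0 < a := by positivity
  have hVrev : ∀ w : ℝ, Vm 1 0 w = u⁻¹ * Vm B 0 (u⁻¹ * w) := by
    intro w
    have hw : u * (u⁻¹ * w) = w := by field_simp
    rw [Vm_scale hB (u⁻¹ * w), ← hu_def, hw, ← mul_assoc, inv_mul_cancel₀ hu.ne', one_mul]
  refine ⟨?_, ?_, ?_, ?_⟩
  · exact (hρ.meas.comp (measurable_id.const_mul u⁻¹)).const_mul a⁻¹
  · intro w; exact mul_nonneg (by positivity) (hρ.nonneg _)
  · have heq : (fun w : ℝ => (a⁻¹ * ρ (u⁻¹ * w)) ^ 3)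
        = fun w => (a ^ 3)⁻¹ * ρ (u⁻¹ * w) ^ 3 := by
      funext w; rw [mul_pow, inv_pow]
    rw [heq]
    exact ((integrable_comp_mul_left_iff (fun z => ρ z ^ 3) (by positivity : u⁻¹ ≠ 0)).2
        hρ.cube_int).const_mul _
  · have : (fun w : ℝ => Vm 1 0 w * (a⁻¹ * ρ (u⁻¹ * w)))
        = fun w => (a⁻¹ * u⁻¹) * ((fun z => Vm B 0 z * ρ z) (u⁻¹ * w)) := by
      funext w
      rw [hVrev w]
      ring
    rw [this]
    exact ((integrable_comp_mul_left_iff (fun z => Vm B 0 z * ρ z)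
      (by positivity : u⁻¹ ≠ 0)).2 hρ.pot_int).const_mul _

end scaling

/-- scaling of the 1D energy without repulsion:
`E^{1D}_w(Z,B) = Z^{3/2} B^{1/4} E^{1D}_w(1,1)`. -/
theorem stmt14 (Z B : ℝ) (hZ : 0 < Z) (hB : 0 < B) :
    E1DwinfW Z B = Z ^ ((3 : ℝ) / 2) * B ^ ((1 : ℝ) / 4) * E1DwinfW 1 1 := by
  set u := Real.sqrt B with hu_def
  set a := Real.sqrt Z * B ^ ((1:ℝ)/4) with ha_def
  set C := Z ^ ((3:ℝ)/2) * B ^ ((1:ℝ)/4) with hC_def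
  have hu : 0 < u := Real.sqrt_pos.2 hB
  have ha : 0 < a := by positivity
  have hC : 0 < C := by positivity
  have hset : { e | ∃ ρ, Adm1w B ρ ∧ e = E1Dw B Z ρ }
      = C • { e | ∃ ρ, Adm1w 1 ρ ∧ e = E1Dw 1 1 ρ } := by
    ext e
    constructor
    · rintro ⟨ρ, hρ, rfl⟩
      set σ : ℝ → ℝ := fun w => a⁻¹ * ρ (u⁻¹ * w) with hσ_def
      have hσ : Adm1w 1 σ := adm_backward hZ hB hρ
      have hρeq : ρ = fun z => a * σ (u * z) := by
        funext z
        rw [hσ_def]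
        simp only [← mul_assoc, inv_mul_cancel₀ hu.ne']
        rw [mul_inv_cancel₀ ha.ne', one_mul, one_mul]
      refine Set.mem_smul_set.2 ⟨E1Dw 1 1 σ, ⟨σ, hσ, rfl⟩, ?_⟩
      rw [smul_eq_mul, ← energy_scale hZ hB σ, ← hρeq]
    · intro he
      obtain ⟨x, ⟨σ, hσ, rfl⟩, rfl⟩ := Set.mem_smul_set.1 he
      exact ⟨fun z => a * σ (u * z), adm_forward hZ hB hσ,
        by rw [smul_eq_mul, ← energy_scale hZ hB σ]⟩
  rw [E1DwinfW, E1DwinfW, hset, Real.sInf_smul_of_nonneg hC.le, smul_eq_mul]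


end
end

section
/- For every z ∈ ℝ one has V_{0,0}^1(z) ≤ min{ 1/|z| , √π / 2 } (with the convention 1/|0| = +∞, i.e. V_{0,0}^1(0) ≤ √π/2). -/
open MeasureTheory Real ENNReal

noncomputable section

/-! ### Auxiliary material for `stmt16` -/

section Stmt16Aux

lemma stmt16_lintegral_gauss2 {b : ℝ} (hb : 0 < b) :
    ∫⁻ x : ℝ × ℝ, ENNReal.ofReal (Real.exp (-(b * (x.1 ^ 2 + x.2 ^ 2)))) =
      ENNReal.ofReal (π / b) := by
  have h1 : ∀ x : ℝ × ℝ, Real.exp (-(b * (x.1 ^ 2 + x.2 ^ 2))) =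
      Real.exp (-b * x.1 ^ 2) * Real.exp (-b * x.2 ^ 2) := by
    intro x; rw [← Real.exp_add]; ring_nf
  have hint : Integrable (fun x : ℝ × ℝ => Real.exp (-b * x.1 ^ 2) * Real.exp (-b * x.2 ^ 2)) := by
    rw [Measure.volume_eq_prod]
    exact (integrable_exp_neg_mul_sq hb).mul_prod (integrable_exp_neg_mul_sq hb)
  calc ∫⁻ x : ℝ × ℝ, ENNReal.ofReal (Real.exp (-(b * (x.1 ^ 2 + x.2 ^ 2))))
      = ∫⁻ x : ℝ × ℝ, ENNReal.ofReal (Real.exp (-b * x.1 ^ 2) * Real.exp (-b * x.2 ^ 2)) := by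
        simp_rw [h1]
    _ = ENNReal.ofReal (∫ x : ℝ × ℝ, Real.exp (-b * x.1 ^ 2) * Real.exp (-b * x.2 ^ 2)) :=
        (ofReal_integral_eq_lintegral_ofReal hint (ae_of_all _ fun x => by positivity)).symm
    _ = ENNReal.ofReal (π / b) := by
        rw [Measure.volume_eq_prod,
          integral_prod_mul (fun x : ℝ => Real.exp (-b * x ^ 2))
            (fun x : ℝ => Real.exp (-b * x ^ 2)),
          integral_gaussian, Real.mul_self_sqrt (by positivity)]

lemma stmt16_lintegral_sub_left (f : ℝ × ℝ → ℝ≥0∞) (hf : Measurable f) (a : ℝ × ℝ) :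
    ∫⁻ x, f (a - x) = ∫⁻ x, f x :=
  (Measure.measurePreserving_sub_left volume a).lintegral_comp hf

lemma stmt16_key (z : ℝ) (g : ℝ × ℝ → ℝ) (hphi : ∀ x : ℝ × ℝ, phiSq 1 0 x = g x)
    (hg_nonneg : ∀ x, 0 ≤ g x) (hg_meas : Measurable g)
    (n : ℝ × ℝ → ℝ) (hn : n = fun u => Real.sqrt (u.1 ^ 2 + u.2 ^ 2 + z ^ 2))
    (hn_meas : Measurable n) (hn_nonneg : ∀ u, 0 ≤ n u)
    (c : ℝ) (hc : 0 ≤ c)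
    (hLc : (∫⁻ x : ℝ × ℝ, ∫⁻ y : ℝ × ℝ,
        ENNReal.ofReal (g x) * ENNReal.ofReal (g y) * ENNReal.ofReal (n (x - y))⁻¹)
      ≤ ENNReal.ofReal c) :
    Vmn 1 0 0 z ≤ c := by
  have hF_nonneg : ∀ x y : ℝ × ℝ, 0 ≤ g x * g y / n (x - y) := fun x y =>
    div_nonneg (mul_nonneg (hg_nonneg x) (hg_nonneg y)) (hn_nonneg _)
  have hFmeas : Measurable (fun p : (ℝ × ℝ) × (ℝ × ℝ) => g p.1 * g p.2 / n (p.1 - p.2)) :=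
    ((hg_meas.comp measurable_fst).mul (hg_meas.comp measurable_snd)).div
      (hn_meas.comp (measurable_fst.sub measurable_snd))
  have hofReal : ∀ x y : ℝ × ℝ, ENNReal.ofReal (g x * g y / n (x - y))
      = ENNReal.ofReal (g x) * ENNReal.ofReal (g y) * ENNReal.ofReal (n (x - y))⁻¹ := by
    intro x y
    rw [div_eq_mul_inv, ENNReal.ofReal_mul (mul_nonneg (hg_nonneg x) (hg_nonneg y)),
      ENNReal.ofReal_mul (hg_nonneg x)]
  have hVeq : Vmn 1 0 0 z =
      (∫⁻ x : ℝ × ℝ, ENNReal.ofReal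
        ((∫⁻ y : ℝ × ℝ, ENNReal.ofReal (g x * g y / n (x - y))).toReal)).toReal := by
    have hrw : ∀ x y : ℝ × ℝ, phiSq 1 0 x * phiSq 1 0 y / normx (x.1 - y.1, x.2 - y.2) z
        = g x * g y / n (x - y) := by
      intro x y; rw [hphi, hphi, hn]; rfl
    have hinner : ∀ x : ℝ × ℝ, (∫ y : ℝ × ℝ, g x * g y / n (x - y)) =
        (∫⁻ y : ℝ × ℝ, ENNReal.ofReal (g x * g y / n (x - y))).toReal := by
      intro x
      rw [integral_eq_lintegral_of_nonneg_ae (ae_of_all _ fun y => hF_nonneg x y)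
        ((hFmeas.comp measurable_prodMk_left).aestronglyMeasurable)]
    rw [Vmn]
    simp_rw [hrw, hinner]
    rw [integral_eq_lintegral_of_nonneg_ae (ae_of_all _ fun x => ENNReal.toReal_nonneg)
      (Measurable.aestronglyMeasurable (by
        exact (Measurable.lintegral_prod_right' (hFmeas.ennreal_ofReal)).ennreal_toReal))]
  rw [hVeq]
  have hA : (∫⁻ x : ℝ × ℝ, ENNReal.ofReal
      ((∫⁻ y : ℝ × ℝ, ENNReal.ofReal (g x * g y / n (x - y))).toReal)) ≤ ENNReal.ofReal c := by
    refine le_trans (le_trans (lintegral_mono fun x => ENNReal.ofReal_toReal_le) ?_) hLc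
    refine le_of_eq (lintegral_congr fun x => lintegral_congr fun y => ?_)
    exact hofReal x y
  calc (∫⁻ x : ℝ × ℝ, ENNReal.ofReal
      ((∫⁻ y : ℝ × ℝ, ENNReal.ofReal (g x * g y / n (x - y))).toReal)).toReal
      ≤ (ENNReal.ofReal c).toReal := ENNReal.toReal_mono ENNReal.ofReal_ne_top hA
    _ = c := ENNReal.toReal_ofReal hc

lemma stmt16_conv (g : ℝ × ℝ → ℝ)
    (hg : g = fun x => (2 * π)⁻¹ * Real.exp (-(x.1 ^ 2 + x.2 ^ 2) / 2))
    (q : ℝ × ℝ → ℝ) (hq : q = fun u => (4 * π)⁻¹ * Real.exp (-(u.1 ^ 2 + u.2 ^ 2) / 4))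
    (u : ℝ × ℝ) :
    (∫⁻ x : ℝ × ℝ, ENNReal.ofReal (g x) * ENNReal.ofReal (g (x - u)))
      = ENNReal.ofReal (q u) := by
  have hπ : (0 : ℝ) < π := Real.pi_pos
  set c2 : ℝ := (2 * π)⁻¹ * (2 * π)⁻¹ * Real.exp (-(u.1 ^ 2 + u.2 ^ 2) / 4) with hc2
  have hc2nn : 0 ≤ c2 := by rw [hc2]; positivity
  have hgg : ∀ x : ℝ × ℝ, g x * g (x - u) =
      c2 * Real.exp (-(1 * (((u / 2 : ℝ × ℝ) - x).1 ^ 2 + ((u / 2 : ℝ × ℝ) - x).2 ^ 2))) := by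
    intro x
    have h1 : ((u / 2 : ℝ × ℝ) - x).1 = u.1 / 2 - x.1 := rfl
    have h2 : ((u / 2 : ℝ × ℝ) - x).2 = u.2 / 2 - x.2 := rfl
    have h3 : (x - u).1 = x.1 - u.1 := rfl
    have h4 : (x - u).2 = x.2 - u.2 := rfl
    simp only [hg, hc2, h1, h2, h3, h4]
    rw [mul_mul_mul_comm, ← Real.exp_add,
      show -(x.1 ^ 2 + x.2 ^ 2) / 2 + -((x.1 - u.1) ^ 2 + (x.2 - u.2) ^ 2) / 2
        = -(u.1 ^ 2 + u.2 ^ 2) / 4 + -(1 * ((u.1 / 2 - x.1) ^ 2 + (u.2 / 2 - x.2) ^ 2)) from by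
          ring,
      Real.exp_add]
    ring
  calc (∫⁻ x : ℝ × ℝ, ENNReal.ofReal (g x) * ENNReal.ofReal (g (x - u)))
      = ∫⁻ x : ℝ × ℝ, ENNReal.ofReal c2 * ENNReal.ofReal
          (Real.exp (-(1 * (((u / 2 : ℝ × ℝ) - x).1 ^ 2 + ((u / 2 : ℝ × ℝ) - x).2 ^ 2)))) := by
        refine lintegral_congr fun x => ?_
        rw [← ENNReal.ofReal_mul (by rw [hg]; positivity), hgg x,
          ENNReal.ofReal_mul hc2nn]
    _ = ENNReal.ofReal c2 * ∫⁻ x : ℝ × ℝ, ENNReal.ofReal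
          (Real.exp (-(1 * (((u / 2 : ℝ × ℝ) - x).1 ^ 2 + ((u / 2 : ℝ × ℝ) - x).2 ^ 2)))) :=
        lintegral_const_mul' _ _ ENNReal.ofReal_ne_top
    _ = ENNReal.ofReal c2 * ENNReal.ofReal (π / 1) := by
        rw [stmt16_lintegral_sub_left
          (fun w => ENNReal.ofReal (Real.exp (-(1 * (w.1 ^ 2 + w.2 ^ 2)))))
          (((Real.continuous_exp.comp (by continuity)).measurable).ennreal_ofReal) (u / 2),
          stmt16_lintegral_gauss2 one_pos]
    _ = ENNReal.ofReal (q u) := by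
        rw [← ENNReal.ofReal_mul hc2nn, hq, hc2]
        congr 1
        field_simp
        ring

lemma stmt16_reduce (G K : ℝ × ℝ → ℝ≥0∞) (hG_meas : Measurable G) (hK_meas : Measurable K)
    (hKne : ∀ w, K w ≠ ⊤) (q : ℝ × ℝ → ℝ)
    (hconv : ∀ u : ℝ × ℝ, (∫⁻ x : ℝ × ℝ, G x * G (x - u)) = ENNReal.ofReal (q u)) :
    (∫⁻ x : ℝ × ℝ, ∫⁻ y : ℝ × ℝ, G x * G y * K (x - y))
      = ∫⁻ u : ℝ × ℝ, ENNReal.ofReal (q u) * K u := by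
  have h1 : ∀ x : ℝ × ℝ, (∫⁻ y : ℝ × ℝ, G x * G y * K (x - y))
      = ∫⁻ w : ℝ × ℝ, G x * G (x - w) * K w := by
    intro x
    have h := stmt16_lintegral_sub_left (fun y => G x * G y * K (x - y))
      ((measurable_const.mul hG_meas).mul (hK_meas.comp (measurable_const.sub measurable_id))) x
    rw [← h]
    refine lintegral_congr fun w => ?_
    show G x * G (x - w) * K (x - (x - w)) = _
    rw [show x - (x - w) = w from by abel]
  simp_rw [h1]
  rw [lintegral_lintegral_swap]
  · refine lintegral_congr fun w => ?_
    rw [← hconv w, ← lintegral_mul_const' (K w) _ (hKne w)]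
  · exact (((hG_meas.comp measurable_fst).mul
      (hG_meas.comp (measurable_fst.sub measurable_snd))).mul
      (hK_meas.comp measurable_snd)).aemeasurable

lemma stmt16_b1 (z : ℝ) (hz : z ≠ 0)
    (n : ℝ × ℝ → ℝ) (hn : n = fun u => Real.sqrt (u.1 ^ 2 + u.2 ^ 2 + z ^ 2))
    (K : ℝ × ℝ → ℝ≥0∞) (hK : K = fun u => ENNReal.ofReal (n u)⁻¹)
    (q : ℝ × ℝ → ℝ) (hq : q = fun u => (4 * π)⁻¹ * Real.exp (-(u.1 ^ 2 + u.2 ^ 2) / 4)) :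
    (∫⁻ u : ℝ × ℝ, ENNReal.ofReal (q u) * K u) ≤ ENNReal.ofReal (1 / |z|) := by
  have hπ : (0 : ℝ) < π := Real.pi_pos
  have hq_int : (∫⁻ u : ℝ × ℝ, ENNReal.ofReal (q u)) = 1 := by
    have h4 : ∀ u : ℝ × ℝ, q u = (4 * π)⁻¹ * Real.exp (-(4⁻¹ * (u.1 ^ 2 + u.2 ^ 2))) := by
      intro u; simp only [hq]
      rw [show -(u.1 ^ 2 + u.2 ^ 2) / 4 = -(4⁻¹ * (u.1 ^ 2 + u.2 ^ 2)) from by ring]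
    simp_rw [h4, ENNReal.ofReal_mul (by positivity : (0:ℝ) ≤ (4 * π)⁻¹)]
    rw [lintegral_const_mul' _ _ ENNReal.ofReal_ne_top, stmt16_lintegral_gauss2 (by norm_num),
      ← ENNReal.ofReal_mul (by positivity)]
    rw [show (4 * π)⁻¹ * (π / 4⁻¹) = 1 from by field_simp]
    exact ENNReal.ofReal_one
  have hzpos : 0 < |z| := abs_pos.mpr hz
  have hKle : ∀ u, K u ≤ ENNReal.ofReal (1 / |z|) := by
    intro u
    simp only [hK]
    apply ENNReal.ofReal_le_ofReal
    rw [one_div]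
    apply inv_anti₀ hzpos
    simp only [hn]
    rw [← Real.sqrt_sq_eq_abs]
    exact Real.sqrt_le_sqrt (by nlinarith [sq_nonneg u.1, sq_nonneg u.2])
  calc (∫⁻ u : ℝ × ℝ, ENNReal.ofReal (q u) * K u)
      ≤ ∫⁻ u : ℝ × ℝ, ENNReal.ofReal (q u) * ENNReal.ofReal (1 / |z|) :=
        lintegral_mono fun u => mul_le_mul_right (hKle u) _
    _ = (∫⁻ u : ℝ × ℝ, ENNReal.ofReal (q u)) * ENNReal.ofReal (1 / |z|) :=
        lintegral_mul_const' _ _ ENNReal.ofReal_ne_top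
    _ = ENNReal.ofReal (1 / |z|) := by rw [hq_int, one_mul]

lemma stmt16_b2 (z : ℝ)
    (n : ℝ × ℝ → ℝ) (hn : n = fun u => Real.sqrt (u.1 ^ 2 + u.2 ^ 2 + z ^ 2))
    (K : ℝ × ℝ → ℝ≥0∞) (hK : K = fun u => ENNReal.ofReal (n u)⁻¹)
    (q : ℝ × ℝ → ℝ) (hq : q = fun u => (4 * π)⁻¹ * Real.exp (-(u.1 ^ 2 + u.2 ^ 2) / 4)) :
    (∫⁻ u : ℝ × ℝ, ENNReal.ofReal (q u) * K u) ≤ ENNReal.ofReal (Real.sqrt π / 2) := by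
  have hπ : (0 : ℝ) < π := Real.pi_pos
  have hsπ : 0 < Real.sqrt π := Real.sqrt_pos.mpr hπ
  have hq_nonneg : ∀ u, 0 ≤ q u := fun u => by simp only [hq]; positivity
  set c : ℝ := (Real.sqrt π)⁻¹ with hc
  have hcnn : 0 ≤ c := by positivity
  have h0 : (volume : Measure (ℝ × ℝ)) {((0:ℝ), (0:ℝ))} = 0 := by
    rw [Measure.volume_eq_prod, ← Set.singleton_prod_singleton, Measure.prod_prod]
    simp
  have h0' : ∀ᵐ u : ℝ × ℝ, u ≠ ((0:ℝ), (0:ℝ)) := by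
    rw [ae_iff]
    convert h0 using 2
    ext u; simp [not_not]
  have hae : ∀ᵐ u : ℝ × ℝ, ENNReal.ofReal (q u) * K u ≤
      ∫⁻ t : ℝ, ENNReal.ofReal (q u * (c * Real.exp (-(u.1 ^ 2 + u.2 ^ 2) * t ^ 2))) := by
    filter_upwards [h0'] with u hu
    have hne : u.1 ≠ 0 ∨ u.2 ≠ 0 := by
      by_contra h; push_neg at h; exact hu (Prod.ext h.1 h.2)
    have hr2 : 0 < u.1 ^ 2 + u.2 ^ 2 := by
      rcases hne with h | h
      · have h1 : 0 < u.1 ^ 2 := (sq_nonneg u.1).lt_of_ne (Ne.symm (pow_ne_zero 2 h))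
        nlinarith [sq_nonneg u.2]
      · have h1 : 0 < u.2 ^ 2 := (sq_nonneg u.2).lt_of_ne (Ne.symm (pow_ne_zero 2 h))
        nlinarith [sq_nonneg u.1]
    have hsr : 0 < Real.sqrt (u.1 ^ 2 + u.2 ^ 2) := Real.sqrt_pos.mpr hr2
    have hnu : Real.sqrt (u.1 ^ 2 + u.2 ^ 2) ≤ n u := by
      simp only [hn]; exact Real.sqrt_le_sqrt (by nlinarith [sq_nonneg z])
    have hint : Integrable (fun t : ℝ => q u * (c * Real.exp (-(u.1 ^ 2 + u.2 ^ 2) * t ^ 2))) :=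
      (((integrable_exp_neg_mul_sq hr2).const_mul c).const_mul (q u))
    rw [← ofReal_integral_eq_lintegral_ofReal hint
      (ae_of_all _ fun t => mul_nonneg (hq_nonneg u) (by positivity))]
    rw [integral_const_mul, integral_const_mul, integral_gaussian]
    simp only [hK]
    rw [← ENNReal.ofReal_mul (hq_nonneg u)]
    apply ENNReal.ofReal_le_ofReal
    apply mul_le_mul_of_nonneg_left _ (hq_nonneg u)
    rw [Real.sqrt_div hπ.le, hc]
    rw [show (Real.sqrt π)⁻¹ * (Real.sqrt π / Real.sqrt (u.1 ^ 2 + u.2 ^ 2))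
        = (Real.sqrt (u.1 ^ 2 + u.2 ^ 2))⁻¹ from by field_simp]
    exact inv_anti₀ hsr hnu
  calc (∫⁻ u : ℝ × ℝ, ENNReal.ofReal (q u) * K u)
      ≤ ∫⁻ u : ℝ × ℝ, ∫⁻ t : ℝ,
          ENNReal.ofReal (q u * (c * Real.exp (-(u.1 ^ 2 + u.2 ^ 2) * t ^ 2))) :=
        lintegral_mono_ae hae
    _ = ∫⁻ t : ℝ, ∫⁻ u : ℝ × ℝ,
          ENNReal.ofReal (q u * (c * Real.exp (-(u.1 ^ 2 + u.2 ^ 2) * t ^ 2))) := by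
        apply lintegral_lintegral_swap
        apply Measurable.aemeasurable
        apply Measurable.ennreal_ofReal
        simp only [hq, Function.uncurry]
        fun_prop
    _ = ∫⁻ t : ℝ, ENNReal.ofReal ((Real.sqrt π)⁻¹ * (1 + 4 * t ^ 2)⁻¹) := by
        refine lintegral_congr fun t => ?_
        have hb : (0:ℝ) < 4⁻¹ + t ^ 2 := by positivity
        have hrw : ∀ u : ℝ × ℝ, q u * (c * Real.exp (-(u.1 ^ 2 + u.2 ^ 2) * t ^ 2))
            = ((4 * π)⁻¹ * c) * Real.exp (-((4⁻¹ + t ^ 2) * (u.1 ^ 2 + u.2 ^ 2))) := by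
          intro u
          simp only [hq]
          rw [show -((4⁻¹ + t ^ 2) * (u.1 ^ 2 + u.2 ^ 2))
              = -(u.1 ^ 2 + u.2 ^ 2) / 4 + -(u.1 ^ 2 + u.2 ^ 2) * t ^ 2 from by ring,
            Real.exp_add]
          ring
        simp_rw [hrw, ENNReal.ofReal_mul (show (0:ℝ) ≤ (4 * π)⁻¹ * c from by positivity)]
        rw [lintegral_const_mul' _ _ ENNReal.ofReal_ne_top, stmt16_lintegral_gauss2 hb,
          ← ENNReal.ofReal_mul (by positivity)]
        congr 1
        rw [hc]
        field_simp
    _ = ENNReal.ofReal (Real.sqrt π / 2) := by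
        have hint4 : Integrable fun t : ℝ => (1 + 4 * t ^ 2)⁻¹ := by
          apply integrable_inv_one_add_sq.mono'
          · exact (measurable_const.add
              ((measurable_id.pow_const 2).const_mul 4)).inv.aestronglyMeasurable
          · refine ae_of_all _ fun t => ?_
            rw [Real.norm_eq_abs, abs_of_nonneg (by positivity)]
            exact inv_anti₀ (by positivity) (by nlinarith [sq_nonneg t])
        rw [← ofReal_integral_eq_lintegral_ofReal (hint4.const_mul _)
          (ae_of_all _ fun t => by positivity)]
        congr 1
        rw [integral_const_mul]
        have h2 : (∫ t : ℝ, (1 + 4 * t ^ 2)⁻¹) = π / 2 := by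
          have h := MeasureTheory.Measure.integral_comp_mul_left
            (fun s : ℝ => (1 + s ^ 2)⁻¹) 2
          rw [integral_univ_inv_one_add_sq] at h
          rw [show (fun t : ℝ => (1 + 4 * t ^ 2)⁻¹) = fun t : ℝ => (1 + (2 * t) ^ 2)⁻¹ from by
            funext t; ring_nf]
          rw [h]
          rw [abs_of_nonneg (by norm_num : (0:ℝ) ≤ 2⁻¹)]
          rw [smul_eq_mul]
          ring
        rw [h2]
        rw [show (Real.sqrt π)⁻¹ * (π / 2) = Real.sqrt π / 2 from by
          rw [← Real.mul_self_sqrt hπ.le]; field_simp; rw [Real.sqrt_sq (Real.sqrt_nonneg _)]]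

end Stmt16Aux

/-- pointwise bound `V_{0,0}¹(z) ≤ min{1/|z|, √π/2}`. -/
theorem stmt16 (z : ℝ) :
    Vmn 1 0 0 z ≤ Real.sqrt π / 2 ∧ (z ≠ 0 → Vmn 1 0 0 z ≤ 1 / |z|) := by
  have hπ : (0 : ℝ) < π := Real.pi_pos
  set g : ℝ × ℝ → ℝ := fun x => (2 * π)⁻¹ * Real.exp (-(x.1 ^ 2 + x.2 ^ 2) / 2) with hgdef
  set nn : ℝ × ℝ → ℝ := fun u => Real.sqrt (u.1 ^ 2 + u.2 ^ 2 + z ^ 2) with hndef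
  set q : ℝ × ℝ → ℝ := fun u => (4 * π)⁻¹ * Real.exp (-(u.1 ^ 2 + u.2 ^ 2) / 4) with hqdef
  have hphi : ∀ x : ℝ × ℝ, phiSq 1 0 x = g x := by
    intro x; simp [phiSq, hgdef, one_div]
  have hg_nonneg : ∀ x, 0 ≤ g x := fun x => by rw [hgdef]; positivity
  have hg_meas : Measurable g := by
    apply Measurable.const_mul
    exact (Real.continuous_exp.comp (by continuity)).measurable
  have hn_meas : Measurable nn := by
    apply Continuous.measurable
    exact Real.continuous_sqrt.comp (by continuity)
  have hn_nonneg : ∀ u, 0 ≤ nn u := fun u => Real.sqrt_nonneg _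
  have hG_meas : Measurable (fun x : ℝ × ℝ => ENNReal.ofReal (g x)) := hg_meas.ennreal_ofReal
  have hK_meas : Measurable (fun u : ℝ × ℝ => ENNReal.ofReal (nn u)⁻¹) :=
    hn_meas.inv.ennreal_ofReal
  have hL : (∫⁻ x : ℝ × ℝ, ∫⁻ y : ℝ × ℝ,
        ENNReal.ofReal (g x) * ENNReal.ofReal (g y) * ENNReal.ofReal (nn (x - y))⁻¹)
      = ∫⁻ u : ℝ × ℝ, ENNReal.ofReal (q u) * ENNReal.ofReal (nn u)⁻¹ :=
    stmt16_reduce (fun x => ENNReal.ofReal (g x)) (fun u => ENNReal.ofReal (nn u)⁻¹)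
      hG_meas hK_meas (fun w => ENNReal.ofReal_ne_top) q
      (fun u => stmt16_conv g hgdef q hqdef u)
  constructor
  · apply stmt16_key z g hphi hg_nonneg hg_meas nn hndef hn_meas hn_nonneg _ (by positivity)
    rw [hL]
    exact stmt16_b2 z nn hndef _ rfl q hqdef
  · intro hz
    apply stmt16_key z g hphi hg_nonneg hg_meas nn hndef hn_meas hn_nonneg _ (by positivity)
    rw [hL]
    exact stmt16_b1 z hz nn hndef _ rfl q hqdef

end
end
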